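/- arXiv:1812.10291 — 16 statements merged into one kernel-verified Lean document; each statement's English description precedes it below -/
import Mathlib

section
/- A ring R is symmetric if and only if for every n ≥ 2 and every permutation π of {1,...,n}, whenever r₁r₂⋯rₙ = 0 for elements rᵢ ∈ R, then r_{π(1)}r_{π(2)}⋯r_{π(n)} = 0. -/
/-- The coefficient of `x^n` in the product of two skew polynomials in `R[x;σ]`
(where `x·r = σ(r)·x`), given their coefficient functions. -/
def skewMul {R : Type*} [Ring R] (σ : R →+* R) (p q : ℕ → R) : ℕ → R :=
  fun n => ∑ i ∈ Finset.range (n + 1), p i * (⇑σ)^[i] (q (n - i))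

/-- A ring is symmetric if `abc = 0` implies `acb = 0`. -/
def SymmetricRing (R : Type*) [Ring R] : Prop :=
  ∀ a b c : R, a * b * c = 0 → a * c * b = 0

/-- `R` is strongly `σ`-symmetric if the skew polynomial ring `R[x;σ]` is symmetric,
expressed via the coefficientwise skew convolution. -/
def StronglySkewSymmetric (R : Type*) [Ring R] (σ : R →+* R) : Prop :=
  ∀ p q r : Polynomial R,
    skewMul σ (skewMul σ p.coeff q.coeff) r.coeff = 0 →
    skewMul σ (skewMul σ p.coeff r.coeff) q.coeff = 0

private lemma four_swap {R : Type*} [Ring R] (h : SymmetricRing R) (a b c d : R)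
    (habcd : a * (b * (c * d)) = 0) : a * (c * (b * d)) = 0 := by
  -- a * b * (c*d) = 0 → a * (c*d) * b = 0 → (a*c) * d * b = 0 → (a*c) * b * d = 0
  have h1 : a * b * (c * d) = 0 := by rw [mul_assoc]; exact habcd
  have h2 : a * (c * d) * b = 0 := h _ _ _ h1
  have h3 : a * c * d * b = 0 := by rw [mul_assoc a c d]; exact h2
  have h4 : a * c * b * d = 0 := h _ _ _ h3
  rw [← h4]; simp [mul_assoc]

private lemma perm_prod {R : Type*} [Ring R] (h : SymmetricRing R)
    {l₁ l₂ : List R} (hp : l₁.Perm l₂) :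
    ∀ a : R, a * l₁.prod = 0 → a * l₂.prod = 0 := by
  induction hp with
  | nil => exact fun a ha => ha
  | cons x _ ih =>
      intro a ha
      simp only [List.prod_cons, ← mul_assoc] at *
      exact ih (a * x) ha
  | swap x y l =>
      intro a ha
      simp only [List.prod_cons] at *
      exact four_swap h a y x l.prod ha
  | trans _ _ ih1 ih2 => exact fun a ha => ih2 a (ih1 a ha)

theorem symmetric_iff_perm (R : Type*) [Ring R] :
    SymmetricRing R ↔
      ∀ n : ℕ, 2 ≤ n → ∀ (π : Equiv.Perm (Fin n)) (r : Fin n → R),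
        (List.ofFn r).prod = 0 → (List.ofFn (r ∘ π)).prod = 0 := by
  constructor
  · intro h n _ π r hr
    have hperm : (List.ofFn r).Perm (List.ofFn (r ∘ π)) :=
      (π.ofFn_comp_perm r).symm
    have := perm_prod h hperm 1 (by simpa using hr)
    simpa using this
  · intro h a b c habc
    have := h 3 (by norm_num) (Equiv.swap 1 2) ![a, b, c] (by
      simp [List.ofFn_succ, ← mul_assoc, habc])
    simp only [List.ofFn_succ, Function.comp] at this
    have h12 : (Equiv.swap (1 : Fin 3) 2) 0 = 0 := by decide
    have h1 : (Equiv.swap (1 : Fin 3) 2) 1 = 2 := by decide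
    have h2 : (Equiv.swap (1 : Fin 3) 2) 2 = 1 := by decide
    rw [h12] at this
    simp [Fin.succ, h1, h2] at this
    -- this : a * (c * b) = 0 hopefully
    rw [mul_assoc]; exact this
end

section
/- The ring R = ℤ₂ × ℤ₂ with componentwise operations, equipped with the swap endomorphism σ((a,b)) = (b,a), is symmetric but the skew polynomial ring R[x;σ] is not symmetric; specifically, for p = (1,1), q = (1,0), r = (0,1)x in R[x;σ], we have pqr = 0 but prq ≠ 0. -/
/-- The swap endomorphism of `ℤ₂ × ℤ₂`. -/
def swapHom : ZMod 2 × ZMod 2 →+* ZMod 2 × ZMod 2 where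
  toFun p := (p.2, p.1)
  map_one' := rfl
  map_mul' _ _ := rfl
  map_zero' := rfl
  map_add' _ _ := rfl


lemma skewMul_C_one {R : Type*} [Ring R] (σ : R →+* R) (q : ℕ → R) :
    skewMul σ (Polynomial.C (1 : R)).coeff q = q := by
  funext n
  simp [skewMul, Polynomial.coeff_one, ite_mul, Finset.sum_ite_eq']

theorem zmod2_prod_symmetric_not_skew_symmetric :
    SymmetricRing (ZMod 2 × ZMod 2) ∧
    skewMul swapHom
      (skewMul swapHom (Polynomial.C ((1 : ZMod 2), (1 : ZMod 2))).coeff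
        (Polynomial.C ((1 : ZMod 2), (0 : ZMod 2))).coeff)
      (Polynomial.C ((0 : ZMod 2), (1 : ZMod 2)) * Polynomial.X).coeff = 0 ∧
    skewMul swapHom
      (skewMul swapHom (Polynomial.C ((1 : ZMod 2), (1 : ZMod 2))).coeff
        (Polynomial.C ((0 : ZMod 2), (1 : ZMod 2)) * Polynomial.X).coeff)
      (Polynomial.C ((1 : ZMod 2), (0 : ZMod 2))).coeff ≠ 0 ∧
    ¬ StronglySkewSymmetric (ZMod 2 × ZMod 2) swapHom := by
  have hone : ((1 : ZMod 2), (1 : ZMod 2)) = (1 : ZMod 2 × ZMod 2) := rfl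
  have h2 : skewMul swapHom
      (skewMul swapHom (Polynomial.C ((1 : ZMod 2), (1 : ZMod 2))).coeff
        (Polynomial.C ((1 : ZMod 2), (0 : ZMod 2))).coeff)
      (Polynomial.C ((0 : ZMod 2), (1 : ZMod 2)) * Polynomial.X).coeff = 0 := by
    rw [hone, skewMul_C_one]
    funext n
    simp [skewMul, Polynomial.coeff_C, Polynomial.coeff_C_mul, Polynomial.coeff_X,
      ite_mul, Finset.sum_ite_eq']
  have h3 : skewMul swapHom
      (skewMul swapHom (Polynomial.C ((1 : ZMod 2), (1 : ZMod 2))).coeff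
        (Polynomial.C ((0 : ZMod 2), (1 : ZMod 2)) * Polynomial.X).coeff)
      (Polynomial.C ((1 : ZMod 2), (0 : ZMod 2))).coeff ≠ 0 := by
    rw [hone, skewMul_C_one]
    intro h
    have := congrFun h 1
    rw [skewMul] at this
    simp [Finset.sum_range_succ, Polynomial.coeff_C, Polynomial.coeff_C_mul,
      Polynomial.coeff_X, swapHom] at this
  refine ⟨fun a b c h => by rw [mul_assoc, mul_comm c b, ← mul_assoc]; exact h, h2, h3, ?_⟩
  intro H
  exact h3 (H _ _ _ h2)
end

section
/- If R is a strongly σ-symmetric ring, then R is both symmetric and σ-symmetric (i.e., right and left σ-symmetric). -/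
lemma iter_zero' {R : Type*} [Ring R] (σ : R →+* R) (j : ℕ) : (⇑σ)^[j] 0 = 0 := by
  induction j with
  | zero => rfl
  | succ n ih => rw [Function.iterate_succ_apply, map_zero, ih]

lemma skewMul_single {R : Type*} [Ring R] (σ : R →+* R) (a b : R) (j k : ℕ) :
    skewMul σ (fun n => if n = j then a else 0) (fun n => if n = k then b else 0)
    = fun n => if n = j + k then a * (⇑σ)^[j] b else 0 := by
  funext n
  unfold skewMul
  simp only [ite_mul, zero_mul]
  rw [Finset.sum_ite_eq' (Finset.range (n + 1)) j]
  by_cases hj : j ∈ Finset.range (n + 1)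
  · rw [if_pos hj]
    simp only [Finset.mem_range] at hj
    by_cases hk : n - j = k
    · rw [if_pos hk, if_pos (by omega)]
    · rw [if_neg hk, iter_zero', mul_zero, if_neg (by omega)]
  · rw [if_neg hj]
    simp only [Finset.mem_range] at hj
    rw [if_neg (by omega)]

lemma coeff_C_fun {R : Type*} [Ring R] (a : R) :
    (Polynomial.C a).coeff = fun n => if n = 0 then a else 0 := by
  funext n; exact Polynomial.coeff_C

lemma coeff_CX_fun {R : Type*} [Ring R] (a : R) :
    (Polynomial.C a * Polynomial.X).coeff = fun n => if n = 1 then a else 0 := by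
  funext n; exact Polynomial.coeff_C_mul_X a n

lemma single_eq_zero {R : Type*} [Ring R] (a : R) (k : ℕ) (ha : a = 0) :
    (fun n => if n = k then a else 0) = (0 : ℕ → R) := by
  funext n; simp [ha]

theorem stronglySkewSymmetric_implies_symmetric_and_sigma_symmetric
    {R : Type*} [Ring R] (σ : R →+* R) (h : StronglySkewSymmetric R σ) :
    SymmetricRing R ∧
    (∀ a b c : R, a * b * c = 0 → a * c * σ b = 0) ∧
    (∀ a b c : R, a * b * c = 0 → σ b * (a * c) = 0) := by
  have hsym : SymmetricRing R := by
    intro a b c habc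
    have := h (Polynomial.C a) (Polynomial.C b) (Polynomial.C c)
    rw [coeff_C_fun, coeff_C_fun, coeff_C_fun, skewMul_single, skewMul_single,
      skewMul_single] at this
    have h0 := this (by
      apply single_eq_zero
      simpa using habc)
    rw [skewMul_single] at h0
    have := congrFun h0 0
    simpa using this
  have hright : ∀ a b c : R, a * b * c = 0 → a * c * σ b = 0 := by
    intro a b c habc
    have := h (Polynomial.C a) (Polynomial.C b) (Polynomial.C c * Polynomial.X)
    rw [coeff_C_fun, coeff_C_fun, coeff_CX_fun, skewMul_single, skewMul_single,
      skewMul_single] at this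
    have h0 := this (by
      apply single_eq_zero
      simpa using habc)
    rw [skewMul_single] at h0
    have := congrFun h0 1
    simpa using this
  refine ⟨hsym, hright, fun a b c habc => ?_⟩
  have h1 : a * c * σ b = 0 := hright a b c habc
  have h2 := hsym 1 (a * c) (σ b) (by simpa using h1)
  simpa [mul_assoc] using h2
end

section
/- Let σ be a surjective endomorphism of a ring R. If R is strongly σ-symmetric and σ-skew quasi Armendariz, then R is σ-skew Armendariz. -/
/-- `R` is `σ`-skew Armendariz. -/
def SkewArmendariz (R : Type*) [Ring R] (σ : R →+* R) : Prop :=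
  ∀ p q : Polynomial R, skewMul σ p.coeff q.coeff = 0 →
    ∀ i j, p.coeff i * (⇑σ)^[i] (q.coeff j) = 0

/-- `R` is `σ`-skew quasi Armendariz. -/
def SkewQuasiArmendariz (R : Type*) [Ring R] (σ : R →+* R) : Prop :=
  ∀ p q : Polynomial R,
    (∀ f : Polynomial R, skewMul σ (skewMul σ p.coeff f.coeff) q.coeff = 0) →
    ∀ i j, ∀ s : R, p.coeff i * s * (⇑σ)^[i] (q.coeff j) = 0

theorem skewQuasiArmendariz_implies_skewArmendariz
    {R : Type*} [Ring R] (σ : R →+* R) (hsurj : Function.Surjective σ)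
    (hsym : StronglySkewSymmetric R σ) (hqa : SkewQuasiArmendariz R σ) :
    SkewArmendariz R σ := by
  intro p q hpq i j
  have h : ∀ f : Polynomial R, skewMul σ (skewMul σ p.coeff f.coeff) q.coeff = 0 := by
    intro f
    apply hsym p q f
    rw [hpq]
    funext n
    simp [skewMul]
  have := hqa p q h i j 1
  simpa using this
end

section
/- Let R be a σ-Armendariz ring. Then the following are equivalent: (1) R is right σ-symmetric; (2) R is symmetric; (3) R is strongly σ-symmetric. -/
/-- `R` is `σ`-Armendariz. -/
def SigmaArmendariz (R : Type*) [Ring R] (σ : R →+* R) : Prop :=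
  ∀ p q : Polynomial R, skewMul σ p.coeff q.coeff = 0 →
    ∀ i j, p.coeff i * q.coeff j = 0

section SigmaArmendarizAux
variable {R : Type*} [Ring R]

private lemma it_zero (σ : R →+* R) (n : ℕ) : (⇑σ)^[n] (0:R) = 0 :=
  Function.iterate_fixed (map_zero σ) n

private lemma it_mul (σ : R →+* R) (n : ℕ) (a b : R) :
    (⇑σ)^[n] (a*b) = (⇑σ)^[n] a * (⇑σ)^[n] b := by
  induction n with
  | zero => simp
  | succ k ih => simp [Function.iterate_succ_apply', ih, map_mul]

private lemma skew_lin (σ : R →+* R) (x y : R) (h : x * σ y = 0) :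
    skewMul σ (Polynomial.monomial 1 x).coeff (Polynomial.monomial 0 y).coeff = 0 := by
  funext n
  simp only [skewMul, Pi.zero_apply]
  refine Finset.sum_eq_zero fun i hi => ?_
  rw [Polynomial.coeff_monomial, Polynomial.coeff_monomial]
  by_cases h1 : (1:ℕ) = i
  · subst h1
    by_cases h2 : (0:ℕ) = n - 1
    · rw [if_pos rfl, if_pos h2]
      simpa using h
    · rw [if_pos rfl, if_neg h2]
      simp [it_zero]
  · rw [if_neg h1, zero_mul]

/-- From `x·σ(y) = 0` conclude `x·y = 0` in a `σ`-Armendariz ring. -/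
private lemma aux1 (σ : R →+* R) (hA : SigmaArmendariz R σ)
    (x y : R) (h : x * σ y = 0) : x * y = 0 := by
  have := hA (Polynomial.monomial 1 x) (Polynomial.monomial 0 y) (skew_lin σ x y h) 1 0
  simpa [Polynomial.coeff_monomial] using this

/-- From `x·y = 0` conclude `σ(x)·y = 0` in a `σ`-Armendariz ring. -/
private lemma aux2 (σ : R →+* R) (hA : SigmaArmendariz R σ)
    (x y : R) (h : x * y = 0) : σ x * y = 0 :=
  aux1 σ hA (σ x) y (by rw [← map_mul, h, map_zero])

private lemma rev (hS : SymmetricRing R) (x y : R) (h : x * y = 0) : y * x = 0 := by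
  have := hS 1 x y (by simpa using h)
  simpa using this

/-- In a symmetric `σ`-Armendariz ring, `x·y = 0` implies `x·σ(y) = 0`. -/
private lemma compat (σ : R →+* R) (hA : SigmaArmendariz R σ) (hS : SymmetricRing R)
    (x y : R) (h : x * y = 0) : x * σ y = 0 :=
  rev hS (σ y) x (aux2 σ hA y x (rev hS x y h))

private lemma compat_iter (σ : R →+* R) (hA : SigmaArmendariz R σ) (hS : SymmetricRing R) :
    ∀ (n : ℕ) (x y : R), x * y = 0 → x * (⇑σ)^[n] y = 0 := by
  intro n
  induction n with
  | zero => intro x y h; simpa using h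
  | succ k ih =>
    intro x y h
    rw [Function.iterate_succ_apply']
    exact compat σ hA hS x _ (ih x y h)

private lemma aux1_iter (σ : R →+* R) (hA : SigmaArmendariz R σ) :
    ∀ (n : ℕ) (x y : R), x * (⇑σ)^[n] y = 0 → x * y = 0 := by
  intro n
  induction n with
  | zero => intro x y h; simpa using h
  | succ k ih =>
    intro x y h
    rw [Function.iterate_succ_apply'] at h
    exact ih x y (aux1 σ hA x _ h)

private lemma exists_poly {f : ℕ → R} {N : ℕ} (hf : ∀ k, N ≤ k → f k = 0) :
    ∃ P : Polynomial R, P.coeff = f := by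
  refine ⟨∑ i ∈ Finset.range N, Polynomial.monomial i (f i), funext fun k => ?_⟩
  rw [Polynomial.finset_sum_coeff]
  simp only [Polynomial.coeff_monomial]
  rw [Finset.sum_ite_eq' (Finset.range N) k f]
  by_cases hk : k ∈ Finset.range N
  · rw [if_pos hk]
  · rw [if_neg hk]
    exact (hf k (Nat.le_of_not_lt (by simpa using hk))).symm

private lemma skew_bound (σ : R →+* R) (p q : Polynomial R) :
    ∀ k, p.natDegree + q.natDegree + 1 ≤ k → skewMul σ p.coeff q.coeff k = 0 := by
  intro k hk
  simp only [skewMul]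
  refine Finset.sum_eq_zero fun l hl => ?_
  by_cases h : l ≤ p.natDegree
  · rw [Polynomial.coeff_eq_zero_of_natDegree_lt (show q.natDegree < k - l by omega),
      it_zero, mul_zero]
  · rw [Polynomial.coeff_eq_zero_of_natDegree_lt (show p.natDegree < l by omega), zero_mul]

private lemma skew_const (σ : R →+* R) (x y : R) :
    skewMul σ (Polynomial.C x).coeff (Polynomial.C y).coeff = (Polynomial.C (x*y)).coeff := by
  funext n
  simp only [skewMul]
  rw [Finset.sum_eq_single_of_mem 0 (Finset.mem_range.mpr n.succ_pos)]
  · simp [Polynomial.coeff_C, mul_ite]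
  · intro b _ hb
    simp [Polynomial.coeff_C, hb]

end SigmaArmendarizAux

theorem sigmaArmendariz_tfae {R : Type*} [Ring R] (σ : R →+* R)
    (hA : SigmaArmendariz R σ) :
    ((∀ a b c : R, a * b * c = 0 → a * c * σ b = 0) ↔ SymmetricRing R) ∧
    (SymmetricRing R ↔ StronglySkewSymmetric R σ) := by
  constructor
  · constructor
    · -- right σ-symmetric → symmetric
      intro hRS a b c h
      exact aux1 σ hA (a*c) b (hRS a b c h)
    · -- symmetric → right σ-symmetric
      intro hS a b c h
      exact compat σ hA hS (a*c) b (hS a b c h)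
  · constructor
    · -- symmetric → strongly σ-symmetric
      intro hS p q r h0
      obtain ⟨PQ, hPQ⟩ := exists_poly (skew_bound σ p q)
      have h1 : skewMul σ PQ.coeff r.coeff = 0 := by rw [hPQ]; exact h0
      have h2 := hA PQ r h1
      have h3 : ∀ i k, skewMul σ p.coeff q.coeff i * r.coeff k = 0 := by
        intro i k
        rw [← hPQ]
        exact h2 i k
      have h4 : ∀ k l m, p.coeff l * (q.coeff m * (⇑σ)^[m] (r.coeff k)) = 0 := by
        intro k
        obtain ⟨Qk, hQk⟩ := exists_poly (f := fun m => q.coeff m * (⇑σ)^[m] (r.coeff k))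
          (N := q.natDegree + 1)
          (fun m hm => by
            have : q.coeff m = 0 := Polynomial.coeff_eq_zero_of_natDegree_lt (by omega)
            rw [this, zero_mul])
        have hz : skewMul σ p.coeff Qk.coeff = 0 := by
          funext i
          simp only [skewMul, Pi.zero_apply]
          have hterm : ∀ l ∈ Finset.range (i+1),
              p.coeff l * (⇑σ)^[l] (Qk.coeff (i - l)) =
              (p.coeff l * (⇑σ)^[l] (q.coeff (i-l))) * (⇑σ)^[i] (r.coeff k) := by
            intro l hl
            have hli : l ≤ i := Nat.lt_succ_iff.mp (Finset.mem_range.mp hl)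
            simp only [hQk]
            rw [it_mul, ← Function.iterate_add_apply, Nat.add_sub_cancel' hli, mul_assoc]
          rw [Finset.sum_congr rfl hterm, ← Finset.sum_mul]
          exact compat_iter σ hA hS i _ _ (h3 i k)
        intro l m
        have := hA p Qk hz l m
        simpa only [hQk] using this
      have h5 : ∀ l m k, p.coeff l * q.coeff m * r.coeff k = 0 := by
        intro l m k
        have := h4 k l m
        rw [← mul_assoc] at this
        exact aux1_iter σ hA m _ _ this
      have h6 : ∀ l m k, p.coeff l * r.coeff k * q.coeff m = 0 :=
        fun l m k => hS _ _ _ (h5 l m k)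
      funext n
      simp only [skewMul, Pi.zero_apply]
      refine Finset.sum_eq_zero fun i hi => ?_
      rw [Finset.sum_mul]
      refine Finset.sum_eq_zero fun l hl => ?_
      have hli : l ≤ i := Nat.lt_succ_iff.mp (Finset.mem_range.mp hl)
      have base : p.coeff l * (r.coeff (i-l) * (⇑σ)^[i-l] (q.coeff (n-i))) = 0 := by
        have t2 := compat_iter σ hA hS (i-l) _ _ (h6 l (n-i) (i-l))
        rwa [mul_assoc] at t2
      have t3 := compat_iter σ hA hS l _ _ base
      rw [it_mul, ← Function.iterate_add_apply, Nat.add_sub_cancel' hli, ← mul_assoc] at t3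
      exact t3
    · -- strongly σ-symmetric → symmetric
      intro hSt a b c h
      have h0 : skewMul σ (skewMul σ (Polynomial.C a).coeff (Polynomial.C b).coeff)
          (Polynomial.C c).coeff = 0 := by
        rw [skew_const σ a b, skew_const σ (a*b) c, h]
        funext n
        simp
      have h1 := hSt (Polynomial.C a) (Polynomial.C b) (Polynomial.C c) h0
      rw [skew_const σ a c, skew_const σ (a*c) b] at h1
      have := congrFun h1 0
      simpa using this
end

section
/- If R is a strongly σ-symmetric ring, then R is σ-compatible, i.e., for all a, b ∈ R, ab = 0 if and only if aσ(b) = 0. -/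
lemma skewMul_C_left {R : Type*} [Ring R] (σ : R →+* R) (a : R) (q : ℕ → R) (n : ℕ) :
    skewMul σ (Polynomial.C a).coeff q n = a * q n := by
  unfold skewMul
  rw [Finset.sum_eq_single_of_mem 0 (by simp)]
  · simp
  · intro i _ hi
    simp [Polynomial.coeff_C, hi]

lemma skewMul_C_right {R : Type*} [Ring R] (σ : R →+* R) (p : ℕ → R) (b : R) (n : ℕ) :
    skewMul σ p (Polynomial.C b).coeff n = p n * (⇑σ)^[n] b := by
  unfold skewMul
  rw [Finset.sum_eq_single_of_mem n (by simp)]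
  · simp
  · intro i hi hne
    have hlt : i < n := lt_of_le_of_ne (Nat.lt_succ_iff.mp (Finset.mem_range.mp hi)) hne
    have : n - i ≠ 0 := Nat.sub_ne_zero_of_lt hlt
    simp [Polynomial.coeff_C, this]

lemma skewMul_X_right_succ {R : Type*} [Ring R] (σ : R →+* R) (p : ℕ → R) (n : ℕ) :
    skewMul σ p (Polynomial.X : Polynomial R).coeff (n + 1) = p n := by
  unfold skewMul
  rw [Finset.sum_eq_single_of_mem n (by simp [Nat.lt_succ_iff])]
  · simp
  · intro i hi hne
    have hle : i ≤ n + 1 := Nat.lt_succ_iff.mp (Finset.mem_range.mp hi)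
    have : n + 1 - i ≠ 1 := by omega
    simp [Polynomial.coeff_X, this, Ne.symm this]

theorem stronglySkewSymmetric_implies_compatible
    {R : Type*} [Ring R] (σ : R →+* R) (h : StronglySkewSymmetric R σ) :
    ∀ a b : R, a * b = 0 ↔ a * σ b = 0 := by
  intro a b
  constructor
  · intro hab
    have key := h (Polynomial.C a) (Polynomial.C b) Polynomial.X ?_
    · have h1 := congrFun key 1
      rw [skewMul_C_right] at h1
      rw [skewMul_C_left] at h1
      simpa using h1
    · have hinner : skewMul σ (Polynomial.C a).coeff (Polynomial.C b).coeff = 0 := by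
        funext m
        rw [Pi.zero_apply, skewMul_C_left]
        rcases Nat.eq_zero_or_pos m with hm | hm
        · simp [hm, hab]
        · simp [Polynomial.coeff_C, Nat.pos_iff_ne_zero.mp hm]
      rw [hinner]
      funext n
      rw [Pi.zero_apply]
      unfold skewMul
      exact Finset.sum_eq_zero fun i _ => by simp
  · intro hab
    have key := h (Polynomial.C a) Polynomial.X (Polynomial.C b) ?_
    · have h1 := congrFun key 1
      rw [show (1 : ℕ) = 0 + 1 from rfl, skewMul_X_right_succ] at h1
      rw [skewMul_C_left] at h1
      simpa using h1
    · funext n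
      rw [Pi.zero_apply, skewMul_C_right, skewMul_C_left]
      rcases eq_or_ne n 1 with hn | hn
      · subst hn
        simpa using hab
      · simp [Polynomial.coeff_X, Ne.symm hn]
end

section
/- A ring R is reduced if and only if R is semiprime and symmetric. -/
section Aux
variable {R : Type*} [Ring R]

lemma red_sq (hR : IsReduced R) {a : R} (h : a * a = 0) : a = 0 :=
  hR.eq_zero a ⟨2, by rw [pow_two]; exact h⟩

lemma red_comm (hR : IsReduced R) {x y : R} (h : x * y = 0) : y * x = 0 := by
  apply red_sq hR
  calc y * x * (y * x) = y * (x * y) * x := by noncomm_ring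
    _ = 0 := by rw [h]; simp

lemma red_insert (hR : IsReduced R) {x y : R} (h : x * y = 0) (z : R) :
    x * z * y = 0 := by
  apply red_sq hR
  have h' := red_comm hR h
  calc x * z * y * (x * z * y) = x * z * (y * x) * z * y := by noncomm_ring
    _ = 0 := by rw [h']; simp

lemma sq_reduced (hsq : ∀ a : R, a * a = 0 → a = 0) : IsReduced R := by
  constructor
  intro a ⟨n, hn⟩
  induction n using Nat.strong_induction_on generalizing a with
  | _ n ih =>
    match n with
    | 0 => simpa using congrArg (a * ·) hn
    | 1 => simpa using hn
    | (m+2) =>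
      have key : a ^ (m+1) * a ^ (m+1) = 0 := by
        have h2 : a ^ (m+1) * a ^ (m+1) = a ^ (m+2) * a ^ m := by
          rw [← pow_add, ← pow_add]; congr 1; omega
        rw [h2, hn, zero_mul]
      exact ih (m+1) (by omega) a (hsq _ key)
end Aux


theorem reduced_iff_semiprime_and_symmetric (R : Type*) [Ring R] :
    IsReduced R ↔
      ((∀ a : R, (∀ r : R, a * r * a = 0) → a = 0) ∧ SymmetricRing R) := by
  constructor
  · intro hR
    refine ⟨fun a h => red_sq hR (by simpa using h 1), ?_⟩
    intro a b c habc
    apply red_sq hR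
    have h1 : a * (b * c) = 0 := by rwa [← mul_assoc]
    have h2 : a * c * (b * c) = 0 := red_insert hR h1 c
    have h3 : (a * c * b) * c = 0 := by rwa [← mul_assoc] at h2
    have h4 : (a * c * b) * a * c = 0 := red_insert hR h3 a
    calc a * c * b * (a * c * b) = ((a * c * b) * a * c) * b := by noncomm_ring
      _ = 0 := by rw [h4, zero_mul]
  · rintro ⟨hsp, hsym⟩
    apply sq_reduced
    intro a ha
    apply hsp
    intro r
    exact hsym a a r (by rw [ha, zero_mul])
end

section
/- Let R be a ring with endomorphism σ, and let {I_λ}_{λ∈Λ} be a family of ideals of R with σ(I_λ) ⊆ I_λ and ⋂_λ I_λ = 0. If each quotient R/I_λ is strongly σ_λ-symmetric (where σ_λ is the induced endomorphism on R/I_λ), then R is strongly σ-symmetric. -/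
/-- `R/I` is strongly symmetric with respect to the endomorphism induced by `σ`
(expressed without forming the quotient: all coefficient identities hold modulo `I`). -/
def StronglySkewSymmetricMod {R : Type*} [Ring R] (σ : R →+* R) (I : Set R) : Prop :=
  ∀ p q r : Polynomial R,
    (∀ n, skewMul σ (skewMul σ p.coeff q.coeff) r.coeff n ∈ I) →
    ∀ n, skewMul σ (skewMul σ p.coeff r.coeff) q.coeff n ∈ I

theorem subdirect_product_stronglySkewSymmetric
    {R : Type*} [Ring R] (σ : R →+* R) {ι : Type*} (I : ι → TwoSidedIdeal R)
    (hσ : ∀ i, ∀ a ∈ I i, σ a ∈ I i)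
    (hinf : ∀ a : R, (∀ i, a ∈ I i) → a = 0)
    (h : ∀ i, StronglySkewSymmetricMod σ (I i : Set R)) :
    StronglySkewSymmetric R σ := by
  intro p q r h0
  funext n
  apply hinf
  intro i
  exact h i p q r (fun m => by rw [h0]; exact (I i).zero_mem) n
end

section
/- Let {R_γ}_{γ∈Γ} be a family of rings, each with an endomorphism σ_γ, and let σ be the product endomorphism on the direct product ∏R_γ. Then each R_γ is strongly σ_γ-symmetric if and only if ∏_{γ∈Γ} R_γ is strongly σ-symmetric. -/
section Aux

variable {Γ : Type*} {R : Γ → Type*} [∀ γ, Ring (R γ)] (σ : ∀ γ, R γ →+* R γ)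

private lemma iter_pi (i : ℕ) (f : ∀ γ, R γ) (γ : Γ) :
    (⇑(Pi.ringHom fun γ => (σ γ).comp (Pi.evalRingHom R γ)))^[i] f γ
      = (⇑(σ γ))^[i] (f γ) := by
  induction i generalizing f with
  | zero => rfl
  | succ n ih =>
    rw [Function.iterate_succ_apply, Function.iterate_succ_apply, ih]
    rfl

private lemma skewMul_apply (p q : ℕ → ∀ γ, R γ) (n : ℕ) (γ : Γ) :
    skewMul (Pi.ringHom fun γ => (σ γ).comp (Pi.evalRingHom R γ)) p q n γ
      = skewMul (σ γ) (fun m => p m γ) (fun m => q m γ) n := by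
  simp only [skewMul, Finset.sum_apply, Pi.mul_apply, iter_pi]

private lemma skewMul_single_s10 [DecidableEq Γ] (γ : Γ) (p q : ℕ → R γ) :
    skewMul (Pi.ringHom fun γ => (σ γ).comp (Pi.evalRingHom R γ))
      (fun m => Pi.single γ (p m)) (fun m => Pi.single γ (q m))
      = fun n => Pi.single γ (skewMul (σ γ) p q n) := by
  funext n
  funext γ'
  rw [skewMul_apply]
  by_cases h : γ' = γ
  · subst h
    simp [skewMul]
  · simp [skewMul, Pi.single_eq_of_ne h]

/-- Lift a polynomial over `R γ` to a polynomial over the product,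
with coefficients `Pi.single γ (coefficient)`. -/
private noncomputable def liftPoly [DecidableEq Γ] (γ : Γ) (p : Polynomial (R γ)) :
    Polynomial (∀ γ, R γ) :=
  p.sum fun n a => Polynomial.monomial n (Pi.single γ a)

private lemma liftPoly_coeff [DecidableEq Γ] (γ : Γ) (p : Polynomial (R γ)) (n : ℕ) :
    (liftPoly γ p).coeff n = Pi.single γ (p.coeff n) := by
  rw [liftPoly, Polynomial.coeff_sum]
  simp only [Polynomial.coeff_monomial]
  rw [Polynomial.sum_def]
  by_cases h : n ∈ p.support
  · rw [Finset.sum_eq_single n]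
    · simp
    · intro b _ hb; simp [hb]
    · intro hn; exact absurd h hn
  · rw [Finset.sum_eq_zero]
    · rw [Polynomial.notMem_support_iff.mp h, Pi.single_zero]
    · intro b hb
      have : b ≠ n := fun e => h (e ▸ hb)
      simp [this]

end Aux

theorem pi_stronglySkewSymmetric
    {Γ : Type*} (R : Γ → Type*) [∀ γ, Ring (R γ)] (σ : ∀ γ, R γ →+* R γ) :
    (∀ γ, StronglySkewSymmetric (R γ) (σ γ)) ↔
      StronglySkewSymmetric (∀ γ, R γ)
        (Pi.ringHom fun γ => (σ γ).comp (Pi.evalRingHom R γ)) := by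
  classical
  constructor
  · intro h p q r hpqr
    funext n
    funext γ
    rw [skewMul_apply]
    have inner_pq : (fun k => skewMul (Pi.ringHom fun γ => (σ γ).comp (Pi.evalRingHom R γ))
        p.coeff q.coeff k γ)
        = skewMul (σ γ) (fun m => p.coeff m γ) (fun m => q.coeff m γ) :=
      funext fun k => skewMul_apply σ _ _ k γ
    have inner_pr : (fun k => skewMul (Pi.ringHom fun γ => (σ γ).comp (Pi.evalRingHom R γ))
        p.coeff r.coeff k γ)
        = skewMul (σ γ) (fun m => p.coeff m γ) (fun m => r.coeff m γ) :=
      funext fun k => skewMul_apply σ _ _ k γ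
    have key : skewMul (σ γ)
        (skewMul (σ γ) (fun m => p.coeff m γ) (fun m => r.coeff m γ))
        (fun m => q.coeff m γ) = 0 := by
      have heq : (fun m => p.coeff m γ) = (p.map (Pi.evalRingHom R γ)).coeff := by
        funext m; rw [Polynomial.coeff_map]; rfl
      have heq2 : (fun m => q.coeff m γ) = (q.map (Pi.evalRingHom R γ)).coeff := by
        funext m; rw [Polynomial.coeff_map]; rfl
      have heq3 : (fun m => r.coeff m γ) = (r.map (Pi.evalRingHom R γ)).coeff := by
        funext m; rw [Polynomial.coeff_map]; rfl
      rw [heq, heq2, heq3]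
      apply h γ
      rw [← heq, ← heq2, ← heq3, ← inner_pq]
      funext m
      have h2 := congrFun (congrFun hpqr m) γ
      rw [skewMul_apply] at h2
      exact h2
    rw [inner_pr]
    exact congrFun key n
  · intro h γ p q r hpqr
    have key := h (liftPoly γ p) (liftPoly γ q) (liftPoly γ r) ?_
    · funext n
      have h1 : (liftPoly γ p).coeff = fun m => Pi.single γ (p.coeff m) := by
        funext m; exact liftPoly_coeff γ p m
      have h2 : (liftPoly γ q).coeff = fun m => Pi.single γ (q.coeff m) := by
        funext m; exact liftPoly_coeff γ q m
      have h3 : (liftPoly γ r).coeff = fun m => Pi.single γ (r.coeff m) := by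
        funext m; exact liftPoly_coeff γ r m
      rw [h1, h2, h3, skewMul_single_s10, skewMul_single_s10] at key
      have := congrFun (congrFun key n) γ
      simpa using this
    · have h1 : (liftPoly γ p).coeff = fun m => Pi.single γ (p.coeff m) := by
        funext m; exact liftPoly_coeff γ p m
      have h2 : (liftPoly γ q).coeff = fun m => Pi.single γ (q.coeff m) := by
        funext m; exact liftPoly_coeff γ q m
      have h3 : (liftPoly γ r).coeff = fun m => Pi.single γ (r.coeff m) := by
        funext m; exact liftPoly_coeff γ r m
      rw [h1, h2, h3, skewMul_single_s10, skewMul_single_s10, hpqr]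
      funext n
      simp
end

section
/- Let e be a central idempotent of a ring R with endomorphism σ satisfying σ(e) = e. Then eR and (1−e)R are both strongly σ-symmetric (with the restricted endomorphisms) if and only if R is strongly σ-symmetric. -/
/-- The subring `S` of `R` (closed under the operations and `σ`) is strongly
`σ`-symmetric: the symmetry condition for skew polynomials with coefficients in `S`. -/
def StronglySkewSymmetricOn {R : Type*} [Ring R] (σ : R →+* R) (S : Set R) : Prop :=
  ∀ p q r : Polynomial R,
    (∀ n, p.coeff n ∈ S) → (∀ n, q.coeff n ∈ S) → (∀ n, r.coeff n ∈ S) →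
    skewMul σ (skewMul σ p.coeff q.coeff) r.coeff = 0 →
    skewMul σ (skewMul σ p.coeff r.coeff) q.coeff = 0

private lemma iter_fix {R : Type*} [Ring R] (σ : R →+* R) (e : R) (hσe : σ e = e) :
    ∀ i, (⇑σ)^[i] e = e := by
  intro i
  induction i with
  | zero => rfl
  | succ n ih => rw [Function.iterate_succ_apply', ih, hσe]

private lemma skewMul_corner {R : Type*} [Ring R] (σ : R →+* R) (e : R)
    (he : IsIdempotentElem e) (hcentral : ∀ r : R, e * r = r * e) (hσe : σ e = e)
    (p q : ℕ → R) :
    skewMul σ (fun n => e * p n) (fun n => e * q n) = fun n => e * skewMul σ p q n := by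
  funext n
  unfold skewMul
  rw [Finset.mul_sum]
  apply Finset.sum_congr rfl
  intro i _
  have hiter : ∀ (j : ℕ) (x : R), (⇑σ)^[j] (e * x) = e * (⇑σ)^[j] x := by
    intro j
    induction j with
    | zero => intro x; rfl
    | succ m ih =>
      intro x
      rw [Function.iterate_succ_apply', Function.iterate_succ_apply', ih, map_mul, hσe]
  rw [hiter]
  set X := (⇑σ)^[i] (q (n - i)) with hX
  calc e * p i * (e * X)
      = e * (p i * e * X) := by rw [mul_assoc, mul_assoc]
    _ = e * (e * p i * X) := by rw [← hcentral (p i)]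
    _ = e * e * (p i * X) := by rw [mul_assoc e (p i) X, ← mul_assoc e e]
    _ = e * (p i * X) := by rw [he]

theorem corner_stronglySkewSymmetric_iff
    {R : Type*} [Ring R] (σ : R →+* R) (e : R) (he : IsIdempotentElem e)
    (hcentral : ∀ r : R, e * r = r * e) (hσe : σ e = e) :
    (StronglySkewSymmetricOn σ {x : R | ∃ r : R, x = e * r} ∧
      StronglySkewSymmetricOn σ {x : R | ∃ r : R, x = (1 - e) * r}) ↔
    StronglySkewSymmetric R σ := by
  constructor
  · rintro ⟨h1, h2⟩ p q r hpqr
    -- complementary idempotent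
    have he' : IsIdempotentElem (1 - e) := he.one_sub
    have hc' : ∀ r : R, (1 - e) * r = r * (1 - e) := by
      intro r; rw [sub_mul, mul_sub, one_mul, mul_one, hcentral]
    have hσe' : σ (1 - e) = 1 - e := by rw [map_sub, map_one, hσe]
    have key : ∀ (f : R), IsIdempotentElem f → (∀ r : R, f * r = r * f) → σ f = f →
        StronglySkewSymmetricOn σ {x : R | ∃ r : R, x = f * r} →
        (fun n => f * skewMul σ (skewMul σ p.coeff r.coeff) q.coeff n) = 0 := by
      intro f hf hcf hσf hSsym
      have hmem : ∀ (s : Polynomial R) (n : ℕ),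
          (Polynomial.C f * s).coeff n ∈ {x : R | ∃ r : R, x = f * r} := by
        intro s n; exact ⟨s.coeff n, by rw [Polynomial.coeff_C_mul]⟩
      have hcoeff : ∀ s : Polynomial R,
          (Polynomial.C f * s).coeff = fun n => f * s.coeff n := by
        intro s; funext n; rw [Polynomial.coeff_C_mul]
      have h0 : skewMul σ (skewMul σ (Polynomial.C f * p).coeff (Polynomial.C f * q).coeff)
          (Polynomial.C f * r).coeff = 0 := by
        rw [hcoeff p, hcoeff q, hcoeff r, skewMul_corner σ f hf hcf hσf,
          skewMul_corner σ f hf hcf hσf, hpqr]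
        funext n; simp
      have := hSsym (Polynomial.C f * p) (Polynomial.C f * q) (Polynomial.C f * r)
        (hmem p) (hmem q) (hmem r) h0
      rw [hcoeff p, hcoeff q, hcoeff r, skewMul_corner σ f hf hcf hσf,
        skewMul_corner σ f hf hcf hσf] at this
      exact this
    have k1 := key e he hcentral hσe h1
    have k2 := key (1 - e) he' hc' hσe' h2
    funext n
    have e1 := congrFun k1 n
    have e2 := congrFun k2 n
    simp only [Pi.zero_apply] at e1 e2
    have : e * skewMul σ (skewMul σ p.coeff r.coeff) q.coeff n
        + (1 - e) * skewMul σ (skewMul σ p.coeff r.coeff) q.coeff n = 0 := by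
      rw [e1, e2, add_zero]
    calc skewMul σ (skewMul σ p.coeff r.coeff) q.coeff n
        = e * skewMul σ (skewMul σ p.coeff r.coeff) q.coeff n
        + (1 - e) * skewMul σ (skewMul σ p.coeff r.coeff) q.coeff n := by
          rw [sub_mul, one_mul, add_sub_cancel]
      _ = 0 := this
  · intro hR
    exact ⟨fun p q r _ _ _ h => hR p q r h, fun p q r _ _ _ h => hR p q r h⟩
end

section
/- Let σ be an endomorphism of a ring R with σᵗ = id_R for some positive integer t. Then R is strongly σ-symmetric if and only if the polynomial ring R[x] is strongly σ̄-symmetric, where σ̄ is the coefficientwise extension of σ to R[x]. -/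
namespace SkewAux

open Polynomial Finset

variable {S : Type*} [Ring S]

lemma skewMul_def (τ : S →+* S) (p q : ℕ → S) (n : ℕ) :
    skewMul τ p q n = ∑ i ∈ Finset.range (n + 1), p i * (⇑τ)^[i] (q (n - i)) := rfl

lemma iterate_zero_map (τ : S →+* S) (i : ℕ) : (⇑τ)^[i] (0 : S) = 0 :=
  Function.iterate_fixed (map_zero τ) i

lemma skewMul_eq_zero_of_lt (τ : S →+* S) (p q : Polynomial S) {n : ℕ}
    (h : p.natDegree + q.natDegree < n) : skewMul τ p.coeff q.coeff n = 0 := by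
  rw [skewMul_def]
  apply Finset.sum_eq_zero
  intro i hi
  have hi' : i ≤ n := by simpa using Nat.lt_succ_iff.mp (Finset.mem_range.mp hi)
  by_cases hip : i ≤ p.natDegree
  · have : q.natDegree < n - i := by omega
    rw [Polynomial.coeff_eq_zero_of_natDegree_lt this, iterate_zero_map, mul_zero]
  · rw [Polynomial.coeff_eq_zero_of_natDegree_lt (by omega), zero_mul]

/-- The skew product packaged as a polynomial. -/
noncomputable def sMul (τ : S →+* S) (p q : Polynomial S) : Polynomial S :=
  ∑ n ∈ Finset.range (p.natDegree + q.natDegree + 1),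
    Polynomial.monomial n (skewMul τ p.coeff q.coeff n)

lemma sMul_coeff (τ : S →+* S) (p q : Polynomial S) (n : ℕ) :
    (sMul τ p q).coeff n = skewMul τ p.coeff q.coeff n := by
  rw [sMul, Polynomial.finset_sum_coeff]
  simp only [Polynomial.coeff_monomial]
  rw [Finset.sum_ite_eq' (Finset.range (p.natDegree + q.natDegree + 1)) n]
  split_ifs with h
  · rfl
  · rw [Finset.mem_range, not_lt] at h
    exact (skewMul_eq_zero_of_lt τ p q (by omega)).symm

lemma natDegree_sMul_le (τ : S →+* S) (p q : Polynomial S) :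
    (sMul τ p q).natDegree ≤ p.natDegree + q.natDegree := by
  apply Polynomial.natDegree_le_iff_coeff_eq_zero.mpr
  intro k hk
  rw [sMul_coeff]
  exact skewMul_eq_zero_of_lt τ p q hk

lemma skewMul_eq_sMul_coeff (τ : S →+* S) (p q : Polynomial S) :
    skewMul τ p.coeff q.coeff = (sMul τ p q).coeff :=
  funext fun n => (sMul_coeff τ p q n).symm

/-- The block embedding of `(R[x])[y;σ̄]` into `R[y;σ]`, substituting `x = y^m`
(with wrap-around, which is harmless for our purposes). -/
noncomputable def emb (m : ℕ) (P : Polynomial (Polynomial S)) : Polynomial S :=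
  ∑ l ∈ Finset.range (m * ((P.support.sup fun n => (P.coeff n).natDegree) + 1)),
    Polynomial.monomial l ((P.coeff (l % m)).coeff (l / m))

lemma coeff_natDegree_le_sup (P : Polynomial (Polynomial S)) (n : ℕ) :
    (P.coeff n).natDegree ≤ P.support.sup fun k => (P.coeff k).natDegree := by
  by_cases h : P.coeff n = 0
  · simp [h]
  · exact Finset.le_sup (f := fun k => (P.coeff k).natDegree)
      (Polynomial.mem_support_iff.mpr h)

lemma emb_coeff {m : ℕ} (hm : 0 < m) (P : Polynomial (Polynomial S)) (l : ℕ) :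
    (emb m P).coeff l = (P.coeff (l % m)).coeff (l / m) := by
  rw [emb, Polynomial.finset_sum_coeff]
  simp only [Polynomial.coeff_monomial]
  rw [Finset.sum_ite_eq' _ l]
  split_ifs with h
  · rfl
  · rw [Finset.mem_range, not_lt] at h
    symm
    apply Polynomial.coeff_eq_zero_of_natDegree_lt
    have h2 : (P.support.sup fun n => (P.coeff n).natDegree) + 1 ≤ l / m := by
      rw [Nat.le_div_iff_mul_le hm, mul_comm]
      exact h
    exact lt_of_le_of_lt (coeff_natDegree_le_sup P (l % m)) (by omega)

lemma emb_zero (m : ℕ) : emb m (0 : Polynomial (Polynomial S)) = 0 := by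
  simp [emb]

lemma emb_eq_zero {m : ℕ} (hm : 0 < m) {P : Polynomial (Polynomial S)}
    (hd : P.natDegree < m) (h : ∀ l, (emb m P).coeff l = 0) : P = 0 := by
  ext n j
  by_cases hn : n < m
  · have := h (m * j + n)
    rw [emb_coeff hm] at this
    rw [Nat.mul_add_mod, Nat.mod_eq_of_lt hn, Nat.mul_add_div hm,
      Nat.div_eq_of_lt hn, add_zero] at this
    simpa using this
  · have hz : P.coeff n = 0 := Polynomial.coeff_eq_zero_of_natDegree_lt (by omega)
    simp [hz]

variable {σ : S →+* S} {t : ℕ}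

lemma iterate_fix (hσt : ∀ a : S, (⇑σ)^[t] a = a) {m : ℕ} (htm : t ∣ m) (a : S) :
    (⇑σ)^[m] a = a := by
  obtain ⟨s, rfl⟩ := htm
  rw [Function.iterate_mul]
  exact Function.iterate_fixed (hσt a) s

lemma iterate_mod (hσt : ∀ a : S, (⇑σ)^[t] a = a) {m : ℕ} (htm : t ∣ m) (i : ℕ) (a : S) :
    (⇑σ)^[i] a = (⇑σ)^[i % m] a := by
  conv_lhs => rw [← Nat.mod_add_div i m]
  rw [Function.iterate_add_apply]
  congr 1
  exact iterate_fix hσt (htm.mul_right _) a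

lemma iterate_map_coeff (σ : S →+* S) (a : ℕ) (f : Polynomial S) (v : ℕ) :
    ((⇑(Polynomial.mapRingHom σ))^[a] f).coeff v = (⇑σ)^[a] (f.coeff v) := by
  induction a generalizing f with
  | zero => rfl
  | succ n ih =>
    rw [Function.iterate_succ_apply, Function.iterate_succ_apply, ih]
    simp [Polynomial.coe_mapRingHom, Polynomial.coeff_map]

lemma iterate_map_C (σ : S →+* S) (i : ℕ) (a : S) :
    (⇑(Polynomial.mapRingHom σ))^[i] (Polynomial.C a) = Polynomial.C ((⇑σ)^[i] a) := by
  induction i generalizing a with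
  | zero => rfl
  | succ n ih =>
    rw [Function.iterate_succ_apply, Function.iterate_succ_apply,
      show (Polynomial.mapRingHom σ) (Polynomial.C a) = Polynomial.C (σ a) from by simp, ih]

lemma sub_mod_div {m i l : ℕ} (hm : 0 < m) (hil : i ≤ l) (hmod : i % m ≤ l % m) :
    (l - i) % m = l % m - i % m ∧ (l - i) / m = l / m - i / m := by
  have h1 := Nat.div_add_mod l m
  have h2 := Nat.div_add_mod i m
  have hlm : l % m < m := Nat.mod_lt _ hm
  have hu : i / m ≤ l / m := Nat.div_le_div_right hil
  have hmul : m * (i / m) ≤ m * (l / m) := Nat.mul_le_mul_left m hu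
  have hsub : m * (l / m - i / m) = m * (l / m) - m * (i / m) := Nat.mul_sub m _ _
  have key : l - i = m * (l / m - i / m) + (l % m - i % m) := by omega
  constructor
  · rw [key, Nat.mul_add_mod, Nat.mod_eq_of_lt (show l % m - i % m < m by omega)]
  · rw [key, Nat.mul_add_div hm, Nat.div_eq_of_lt (show l % m - i % m < m by omega), add_zero]

lemma sub_mod_big {m i l : ℕ} (hm : 0 < m) (hil : i ≤ l) (hmod : l % m < i % m) :
    (l - i) % m = m + l % m - i % m := by
  have h1 := Nat.div_add_mod l m
  have h2 := Nat.div_add_mod i m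
  have him : i % m < m := Nat.mod_lt _ hm
  have hlm : l % m < m := Nat.mod_lt _ hm
  have hu : i / m < l / m := by
    have hml : m * (i / m) < m * (l / m) := by omega
    exact lt_of_mul_lt_mul_left hml (Nat.zero_le m)
  have hmul : m * (i / m) + m ≤ m * (l / m) := by
    calc m * (i / m) + m = m * (i / m + 1) := by ring
    _ ≤ m * (l / m) := Nat.mul_le_mul_left m hu
  have hsub : m * (l / m - i / m - 1) = m * (l / m) - m * (i / m) - m := by
    rw [Nat.mul_sub, Nat.mul_sub, Nat.mul_one]
  have key : l - i = m * (l / m - i / m - 1) + (m + l % m - i % m) := by omega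
  rw [key, Nat.mul_add_mod, Nat.mod_eq_of_lt (show m + l % m - i % m < m by omega)]

lemma emb_skewMul (hσt : ∀ a : S, (⇑σ)^[t] a = a) {m : ℕ} (hm : 0 < m) (htm : t ∣ m)
    (P Q : Polynomial (Polynomial S)) (hd : P.natDegree + Q.natDegree < m) (l : ℕ) :
    skewMul σ (emb m P).coeff (emb m Q).coeff l =
      (skewMul (Polynomial.mapRingHom σ) P.coeff Q.coeff (l % m)).coeff (l / m) := by
  have hlm : l % m < m := Nat.mod_lt _ hm
  simp only [skewMul_def]
  rw [Polynomial.finset_sum_coeff]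
  simp only [Polynomial.coeff_mul, Finset.Nat.sum_antidiagonal_eq_sum_range_succ_mk,
    iterate_map_coeff]
  rw [← Finset.sum_product']
  simp only [emb_coeff hm]
  rw [← Finset.sum_filter_add_sum_filter_not (Finset.range (l + 1)) (fun i => i % m ≤ l % m)]
  have hzero : ∑ i ∈ (Finset.range (l + 1)).filter (fun i => ¬ i % m ≤ l % m),
      (P.coeff (i % m)).coeff (i / m) *
        (⇑σ)^[i] ((Q.coeff ((l - i) % m)).coeff ((l - i) / m)) = 0 := by
    apply Finset.sum_eq_zero
    intro i hi
    simp only [Finset.mem_filter, Finset.mem_range, not_le] at hi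
    obtain ⟨hil, hmod⟩ := hi
    have hil' : i ≤ l := Nat.lt_succ_iff.mp hil
    by_cases hp : P.coeff (i % m) = 0
    · rw [hp]; simp
    · have ha : i % m ≤ P.natDegree := Polynomial.le_natDegree_of_ne_zero hp
      have hQ : Q.coeff ((l - i) % m) = 0 := by
        apply Polynomial.coeff_eq_zero_of_natDegree_lt
        rw [sub_mod_big hm hil' hmod]
        omega
      rw [hQ]
      simp [iterate_zero_map]
  rw [hzero, add_zero]
  apply Finset.sum_nbij' (i := fun i => (i % m, i / m)) (j := fun p => m * p.2 + p.1)
  · intro i hi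
    simp only [Finset.mem_filter, Finset.mem_range] at hi
    simp only [Finset.mem_product, Finset.mem_range]
    exact ⟨Nat.lt_succ_of_le hi.2, Nat.lt_succ_of_le (Nat.div_le_div_right (Nat.lt_succ_iff.mp hi.1))⟩
  · intro p hp
    simp only [Finset.mem_product, Finset.mem_range, Nat.lt_succ_iff] at hp
    obtain ⟨ha, hu⟩ := hp
    have ham : p.1 < m := lt_of_le_of_lt ha hlm
    have hmul : m * p.2 ≤ m * (l / m) := Nat.mul_le_mul_left m hu
    have h1 := Nat.div_add_mod l m
    simp only [Finset.mem_filter, Finset.mem_range]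
    constructor
    · omega
    · rw [Nat.mul_add_mod, Nat.mod_eq_of_lt ham]; exact ha
  · intro i _
    exact Nat.div_add_mod i m
  · intro p hp
    simp only [Finset.mem_product, Finset.mem_range, Nat.lt_succ_iff] at hp
    have ham : p.1 < m := lt_of_le_of_lt hp.1 hlm
    ext
    · simp [Nat.mul_add_mod, Nat.mod_eq_of_lt ham]
    · simp [Nat.mul_add_div hm, Nat.div_eq_of_lt ham]
  · intro i hi
    simp only [Finset.mem_filter, Finset.mem_range] at hi
    obtain ⟨hil, hmod⟩ := hi
    have hil' : i ≤ l := Nat.lt_succ_iff.mp hil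
    obtain ⟨e1, e2⟩ := sub_mod_div hm hil' hmod
    rw [e1, e2, iterate_mod hσt htm i]

end SkewAux

theorem polynomial_stronglySkewSymmetric_iff
    {R : Type*} [Ring R] (σ : R →+* R) (t : ℕ) (ht : 0 < t)
    (hσt : ∀ a : R, (⇑σ)^[t] a = a) :
    StronglySkewSymmetric R σ ↔
      StronglySkewSymmetric (Polynomial R) (Polynomial.mapRingHom σ) := by
  open SkewAux in
  constructor
  · -- forward: R strongly σ-symmetric → R[x] strongly σ̄-symmetric
    intro hR P Q H h
    set σ' := Polynomial.mapRingHom σ with hσ'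
    set m := t * (P.natDegree + Q.natDegree + H.natDegree + 1) with hmdef
    have hm : 0 < m := Nat.mul_pos ht (Nat.succ_pos _)
    have htm : t ∣ m := Dvd.intro _ rfl
    have hbig : P.natDegree + Q.natDegree + H.natDegree + 1 ≤ m :=
      Nat.le_mul_of_pos_left _ ht
    have dPQ := natDegree_sMul_le σ' P Q
    have dPH := natDegree_sMul_le σ' P H
    have dPHQ := natDegree_sMul_le σ' (sMul σ' P H) Q
    -- package hypothesis as a polynomial identity
    have h0 : sMul σ' (sMul σ' P Q) H = 0 := by
      apply Polynomial.ext
      intro n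
      rw [Polynomial.coeff_zero, sMul_coeff, ← skewMul_eq_sMul_coeff]
      simpa using congrFun h n
    -- embedding identities
    have e1 : skewMul σ (emb m P).coeff (emb m Q).coeff = (emb m (sMul σ' P Q)).coeff := by
      funext l
      rw [emb_skewMul hσt hm htm P Q (by omega) l, emb_coeff hm, sMul_coeff]
    have e2 : skewMul σ (emb m (sMul σ' P Q)).coeff (emb m H).coeff =
        (emb m (sMul σ' (sMul σ' P Q) H)).coeff := by
      funext l
      rw [emb_skewMul hσt hm htm (sMul σ' P Q) H (by omega) l, emb_coeff hm, sMul_coeff]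
    have e3 : skewMul σ (emb m P).coeff (emb m H).coeff = (emb m (sMul σ' P H)).coeff := by
      funext l
      rw [emb_skewMul hσt hm htm P H (by omega) l, emb_coeff hm, sMul_coeff]
    have e4 : skewMul σ (emb m (sMul σ' P H)).coeff (emb m Q).coeff =
        (emb m (sMul σ' (sMul σ' P H) Q)).coeff := by
      funext l
      rw [emb_skewMul hσt hm htm (sMul σ' P H) Q (by omega) l, emb_coeff hm, sMul_coeff]
    have hyp : skewMul σ (skewMul σ (emb m P).coeff (emb m Q).coeff) (emb m H).coeff = 0 := by
      rw [e1, e2, h0, emb_zero]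
      rfl
    have conc := hR (emb m P) (emb m Q) (emb m H) hyp
    rw [e3, e4] at conc
    have hz : sMul σ' (sMul σ' P H) Q = 0 := by
      apply emb_eq_zero hm (by omega)
      intro l
      rw [conc]
      rfl
    funext n
    rw [skewMul_eq_sMul_coeff, ← sMul_coeff σ' (sMul σ' P H) Q n, hz]
    rfl
  · -- backward: R[x] strongly σ̄-symmetric → R strongly σ-symmetric
    intro hS p q r h
    set σ' := Polynomial.mapRingHom σ with hσ'
    have key : ∀ a b : Polynomial R,
        skewMul σ' (a.map Polynomial.C).coeff (b.map Polynomial.C).coeff =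
          ((sMul σ a b).map Polynomial.C).coeff := by
      intro a b
      funext n
      simp only [skewMul_def, Polynomial.coeff_map, sMul_coeff, hσ', iterate_map_C,
        ← map_mul, ← map_sum]
    have h0 : sMul σ (sMul σ p q) r = 0 := by
      apply Polynomial.ext
      intro n
      rw [Polynomial.coeff_zero, sMul_coeff, ← skewMul_eq_sMul_coeff]
      simpa using congrFun h n
    have hyp : skewMul σ' (skewMul σ' (p.map Polynomial.C).coeff (q.map Polynomial.C).coeff)
        (r.map Polynomial.C).coeff = 0 := by
      rw [key p q, key (sMul σ p q) r, h0]
      funext n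
      simp
    have conc := hS (p.map Polynomial.C) (q.map Polynomial.C) (r.map Polynomial.C) hyp
    rw [key p r, key (sMul σ p r) q] at conc
    funext n
    have hc := congrFun conc n
    rw [Polynomial.coeff_map] at hc
    have hc' : (sMul σ (sMul σ p r) q).coeff n = 0 := Polynomial.C_eq_zero.mp (by simpa using hc)
    show skewMul σ (skewMul σ p.coeff r.coeff) q.coeff n = 0
    rw [skewMul_eq_sMul_coeff, ← sMul_coeff]
    exact hc'
end

section
/- Let R be a ring with automorphism σ and let Δ be a multiplicatively closed set of central regular elements of R with σ(Δ) = Δ. Then R is strongly σ-symmetric if and only if the localization Δ⁻¹R is strongly σ̄-symmetric, where σ̄(u⁻¹r) = σ(u)⁻¹σ(r). -/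
namespace LocAux

variable {S : Type*} [Ring S]

/-- pointwise product of coefficient functions -/
def pw (a E : ℕ → S) : ℕ → S := fun n => a n * E n

theorem iter_zero (ρ : S →+* S) (i : ℕ) : (⇑ρ)^[i] (0 : S) = 0 := by
  induction i with
  | zero => rfl
  | succ k ih => rw [Function.iterate_succ_apply', ih, map_zero]

theorem iter_sum (ρ : S →+* S) (i : ℕ) {ι : Type*} (s : Finset ι) (f : ι → S) :
    (⇑ρ)^[i] (∑ x ∈ s, f x) = ∑ x ∈ s, (⇑ρ)^[i] (f x) := by
  induction i generalizing f with
  | zero => rfl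
  | succ k ih =>
    rw [Function.iterate_succ_apply, map_sum]
    exact ih _

theorem skewMul_zero_left (ρ : S →+* S) (q : ℕ → S) : skewMul ρ 0 q = 0 := by
  funext n
  simp [skewMul]

theorem skewMul_zero_right (ρ : S →+* S) (p : ℕ → S) : skewMul ρ p 0 = 0 := by
  funext n
  simp [skewMul, iter_zero]

theorem skewMul_C_left (ρ : S →+* S) (c : S) (a : ℕ → S) :
    skewMul ρ (Polynomial.C c).coeff a = fun n => c * a n := by
  funext n
  rw [skewMul, Finset.sum_eq_single 0]
  · simp
  · intro i _ hi
    simp [Polynomial.coeff_C, hi]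
  · intro h
    exact absurd (Finset.mem_range.mpr (Nat.succ_pos n)) h

theorem skewMul_C_right (ρ : S →+* S) (a : ℕ → S) (c : S) :
    skewMul ρ a (Polynomial.C c).coeff = fun n => a n * (⇑ρ)^[n] c := by
  funext n
  rw [skewMul, Finset.sum_eq_single n]
  · simp
  · intro i hi hne
    have : ¬ (n - i = 0) := by
      rw [Finset.mem_range] at hi; omega
    simp [Polynomial.coeff_C, this, iter_zero]
  · intro h
    exact absurd (Finset.mem_range.mpr (Nat.lt_succ_self n)) h

theorem skewMul_one_left (ρ : S →+* S) (a : ℕ → S) :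
    skewMul ρ (1 : Polynomial S).coeff a = a := by
  rw [← Polynomial.C_1, skewMul_C_left]
  funext n; rw [one_mul]

theorem skewMul_bound (ρ : S →+* S) (a b : ℕ → S) (Na Nb : ℕ)
    (ha : ∀ n, Na < n → a n = 0) (hb : ∀ n, Nb < n → b n = 0) :
    ∀ n, Na + Nb < n → skewMul ρ a b n = 0 := by
  intro n hn
  rw [skewMul]
  apply Finset.sum_eq_zero
  intro i hi
  rw [Finset.mem_range] at hi
  rcases le_or_gt i Na with h | h
  · rw [hb (n - i) (by omega), iter_zero, mul_zero]
  · rw [ha i h, zero_mul]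

theorem skewMul_assoc (ρ : S →+* S) (p q r : ℕ → S) :
    skewMul ρ (skewMul ρ p q) r = skewMul ρ p (skewMul ρ q r) := by
  funext n
  have L : skewMul ρ (skewMul ρ p q) r n
      = ∑ x ∈ (Finset.range (n+1)).sigma (fun m => Finset.range (m+1)),
          p x.2 * (⇑ρ)^[x.2] (q (x.1 - x.2)) * (⇑ρ)^[x.1] (r (n - x.1)) := by
    calc skewMul ρ (skewMul ρ p q) r n
        = ∑ m ∈ Finset.range (n+1), ∑ i ∈ Finset.range (m+1),
            p i * (⇑ρ)^[i] (q (m - i)) * (⇑ρ)^[m] (r (n - m)) := by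
          rw [skewMul]
          exact Finset.sum_congr rfl fun m _ => by rw [skewMul, Finset.sum_mul]
      _ = _ := Finset.sum_sigma' _ _ _
  have Rr : skewMul ρ p (skewMul ρ q r) n
      = ∑ x ∈ (Finset.range (n+1)).sigma (fun i => Finset.range (n - i + 1)),
          p x.1 * (⇑ρ)^[x.1] (q x.2) * (⇑ρ)^[x.1 + x.2] (r (n - x.1 - x.2)) := by
    calc skewMul ρ p (skewMul ρ q r) n
        = ∑ i ∈ Finset.range (n+1), ∑ j ∈ Finset.range (n - i + 1),
            p i * (⇑ρ)^[i] (q j) * (⇑ρ)^[i + j] (r (n - i - j)) := by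
          rw [skewMul]
          refine Finset.sum_congr rfl fun i _ => ?_
          rw [skewMul, iter_sum, Finset.mul_sum]
          refine Finset.sum_congr rfl fun j _ => ?_
          rw [iterate_map_mul, ← mul_assoc, Function.iterate_add_apply, Nat.sub_sub]
      _ = _ := Finset.sum_sigma' _ _ _
  rw [L, Rr]
  refine Finset.sum_nbij' (fun x => ⟨x.2, x.1 - x.2⟩) (fun x => ⟨x.1 + x.2, x.1⟩)
    ?_ ?_ ?_ ?_ ?_
  · intro a ha
    simp only [Finset.mem_sigma, Finset.mem_range] at ha ⊢
    omega
  · intro a ha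
    simp only [Finset.mem_sigma, Finset.mem_range] at ha ⊢
    omega
  · intro a ha
    simp only [Finset.mem_sigma, Finset.mem_range] at ha
    ext <;> simp <;> omega
  · intro a ha
    simp only [Finset.mem_sigma, Finset.mem_range] at ha
    ext <;> simp <;> omega
  · intro a ha
    simp only [Finset.mem_sigma, Finset.mem_range] at ha
    have h1 : a.2 + (a.1 - a.2) = a.1 := by omega
    have h2 : n - a.2 - (a.1 - a.2) = n - a.1 := by omega
    simp only [h1, h2]

theorem exists_poly (a : ℕ → S) (N : ℕ) (ha : ∀ n, N < n → a n = 0) :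
    ∃ p : Polynomial S, p.coeff = a := by
  refine ⟨∑ i ∈ Finset.range (N+1), Polynomial.C (a i) * Polynomial.X ^ i, funext fun n => ?_⟩
  rw [Polynomial.finset_sum_coeff]
  simp only [Polynomial.coeff_C_mul, Polynomial.coeff_X_pow]
  rcases le_or_gt n N with h | h
  · rw [Finset.sum_eq_single n]
    · simp
    · intro i _ hne
      simp [Ne.symm hne]
    · intro hmem
      exact absurd (Finset.mem_range.mpr (by omega)) hmem
  · rw [Finset.sum_eq_zero, ha n h]
    intro i hi
    rw [Finset.mem_range] at hi
    have : n ≠ i := by omega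
    simp [this]



def Bdd (a : ℕ → S) : Prop := ∃ N, ∀ n, N < n → a n = 0

theorem Bdd.pw' {a : ℕ → S} (ha : Bdd a) (E : ℕ → S) : Bdd (pw a E) := by
  obtain ⟨N, hN⟩ := ha
  exact ⟨N, fun n hn => by rw [pw, hN n hn, zero_mul]⟩

theorem Bdd.skew {ρ : S →+* S} {a b : ℕ → S} (ha : Bdd a) (hb : Bdd b) :
    Bdd (skewMul ρ a b) := by
  obtain ⟨Na, hNa⟩ := ha
  obtain ⟨Nb, hNb⟩ := hb
  exact ⟨Na + Nb, skewMul_bound ρ a b Na Nb hNa hNb⟩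

theorem Bdd.C' (c : S) : Bdd (Polynomial.C c).coeff :=
  ⟨0, fun n hn => by rw [Polynomial.coeff_C, if_neg (by omega)]⟩

theorem Bdd.one' : Bdd (1 : Polynomial S).coeff := by
  rw [← Polynomial.C_1]; exact Bdd.C' 1

theorem Bdd.realize {a : ℕ → S} (ha : Bdd a) : ∃ p : Polynomial S, p.coeff = a := by
  obtain ⟨N, hN⟩ := ha
  exact exists_poly a N hN

section Sym
variable {ρ : S →+* S} (hS : StronglySkewSymmetric S ρ)
include hS

theorem s3 {a b c : ℕ → S} (ha : Bdd a) (hb : Bdd b) (hc : Bdd c)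
    (H : skewMul ρ (skewMul ρ a b) c = 0) :
    skewMul ρ (skewMul ρ a c) b = 0 := by
  obtain ⟨pa, rfl⟩ := ha.realize
  obtain ⟨pb, rfl⟩ := hb.realize
  obtain ⟨pc, rfl⟩ := hc.realize
  exact hS pa pb pc H

theorem rot2 {a b : ℕ → S} (ha : Bdd a) (hb : Bdd b)
    (H : skewMul ρ a b = 0) : skewMul ρ b a = 0 := by
  have h1 : skewMul ρ (skewMul ρ (1 : Polynomial S).coeff a) b = 0 := by
    rw [skewMul_one_left]; exact H
  have h2 := s3 hS Bdd.one' ha hb h1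
  rwa [skewMul_one_left] at h2

end Sym

theorem resolve (ρ : S →+* S) (a E : ℕ → S) (c e : S) (N : ℕ)
    (hres : ∀ n ≤ N, E n * (⇑ρ)^[n] c = e)
    (hab : ∀ n, N < n → a n = 0)
    (hec : ∀ r : S, e * r = r * e) :
    skewMul ρ (pw a E) (Polynomial.C c).coeff = skewMul ρ (Polynomial.C e).coeff a := by
  rw [skewMul_C_right, skewMul_C_left]
  funext n
  rcases le_or_gt n N with h | h
  · rw [pw, mul_assoc, hres n h, hec]
  · rw [pw, hab n h, zero_mul, zero_mul, mul_zero]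

end LocAux

namespace LocAux
variable {R : Type*} [Ring R]

theorem iterDelta (σ' : R →+* R) (Δ : Submonoid R)
    (hΔσ : ∀ u ∈ Δ, σ' u ∈ Δ) (v : R) (hv : v ∈ Δ) : ∀ i, (⇑σ')^[i] v ∈ Δ := by
  intro i; induction i with
  | zero => exact hv
  | succ k ih => rw [Function.iterate_succ_apply']; exact hΔσ _ ih

theorem reg_cancel (σ' : R →+* R) (Δ : Submonoid R)
    (hcen : ∀ u ∈ Δ, ∀ r : R, u * r = r * u)
    (hreg : ∀ u ∈ Δ, ∀ r : R, u * r = 0 → r = 0)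
    (hΔσ : ∀ u ∈ Δ, σ' u ∈ Δ)
    (c : R) (hc : c ∈ Δ) (a : ℕ → R)
    (H : skewMul σ' a (Polynomial.C c).coeff = 0) : a = 0 := by
  funext n
  have h1 : a n * (⇑σ')^[n] c = 0 := by
    have := congrFun H n
    rwa [skewMul_C_right] at this
  have hcn := iterDelta σ' Δ hΔσ c hc n
  rw [← hcen _ hcn (a n)] at h1
  exact hreg _ hcn _ h1

theorem chainLemma (σ' : R →+* R) (Δ : Submonoid R)
    (hcen : ∀ u ∈ Δ, ∀ r : R, u * r = r * u)
    (hreg : ∀ u ∈ Δ, ∀ r : R, u * r = 0 → r = 0)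
    (hΔσ : ∀ u ∈ Δ, σ' u ∈ Δ)
    (hR : StronglySkewSymmetric R σ')
    (f g h : ℕ → R) (v w : R) (hv : v ∈ Δ) (hw : w ∈ Δ)
    (N1 Ng Nh N2 N3 : ℕ) (hN2 : N1 + Ng ≤ N2) (hN3 : N1 + Nh ≤ N3)
    (hfb : ∀ n, N1 < n → f n = 0) (hgb : ∀ n, Ng < n → g n = 0) (hhb : ∀ n, Nh < n → h n = 0)
    (V1 W2 W1 V2 : ℕ → R) (tv1 tw2 tw1 tv2 : R)
    (htv1 : tv1 ∈ Δ) (htw2 : tw2 ∈ Δ) (htw1 : tw1 ∈ Δ) (htv2 : tv2 ∈ Δ)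
    (hrV1 : ∀ n ≤ N1, V1 n * (⇑σ')^[n] v = tv1)
    (hrW2 : ∀ n ≤ N2, W2 n * (⇑σ')^[n] w = tw2)
    (hrW1 : ∀ n ≤ N1, W1 n * (⇑σ')^[n] w = tw1)
    (hrV2 : ∀ n ≤ N3, V2 n * (⇑σ')^[n] v = tv2)
    (hyp : skewMul σ' (pw (skewMul σ' (pw f V1) g) W2) h = 0) :
    skewMul σ' (pw (skewMul σ' (pw f W1) h) V2) g = 0 := by
  have bf : Bdd f := ⟨N1, hfb⟩
  have bg : Bdd g := ⟨Ng, hgb⟩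
  have bh : Bdd h := ⟨Nh, hhb⟩
  have bB : Bdd (skewMul σ' (pw f V1) g) := (bf.pw' V1).skew bg
  have hBb : ∀ n, N2 < n → skewMul σ' (pw f V1) g n = 0 := by
    intro n hn
    exact skewMul_bound σ' _ _ N1 Ng (fun m hm => by rw [pw, hfb m hm, zero_mul]) hgb n (by omega)
  set B := skewMul σ' (pw f V1) g with hBdef
  -- step 1-3
  have h1 : skewMul σ' h (pw B W2) = 0 := rot2 hR (bB.pw' W2) bh hyp
  have h3 : skewMul σ' (skewMul σ' h (Polynomial.C tw2).coeff) B = 0 := by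
    have h2 : skewMul σ' (skewMul σ' h (pw B W2)) (Polynomial.C w).coeff = 0 := by
      rw [h1, skewMul_zero_left]
    rw [skewMul_assoc, resolve σ' B W2 w tw2 N2 hrW2 hBb (hcen _ htw2), ← skewMul_assoc] at h2
    exact h2
  have h4 : skewMul σ' (skewMul σ' h B) (Polynomial.C tw2).coeff = 0 :=
    s3 hR bh (Bdd.C' tw2) bB h3
  have h5 : skewMul σ' h B = 0 := reg_cancel σ' Δ hcen hreg hΔσ tw2 htw2 _ h4
  have h6 : skewMul σ' (skewMul σ' h (pw f V1)) g = 0 := by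
    rw [skewMul_assoc]; exact h5
  have h7 : skewMul σ' (skewMul σ' h g) (pw f V1) = 0 := s3 hR bh (bf.pw' V1) bg h6
  have h9 : skewMul σ' (skewMul σ' (skewMul σ' h g) (Polynomial.C tv1).coeff) f = 0 := by
    have h8 : skewMul σ' (skewMul σ' (skewMul σ' h g) (pw f V1)) (Polynomial.C v).coeff = 0 := by
      rw [h7, skewMul_zero_left]
    rwa [skewMul_assoc, resolve σ' f V1 v tv1 N1 hrV1 hfb (hcen _ htv1), ← skewMul_assoc] at h8
  have h10 : skewMul σ' (skewMul σ' (skewMul σ' h g) f) (Polynomial.C tv1).coeff = 0 :=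
    s3 hR (bh.skew bg) (Bdd.C' tv1) bf h9
  have hK : skewMul σ' (skewMul σ' h g) f = 0 := reg_cancel σ' Δ hcen hreg hΔσ tv1 htv1 _ h10
  -- rebuild
  have h12 : skewMul σ' f (skewMul σ' h g) = 0 := rot2 hR (bh.skew bg) bf hK
  have h13 : skewMul σ' (skewMul σ' (pw f W1) (Polynomial.C w).coeff) (skewMul σ' h g) = 0 := by
    rw [resolve σ' f W1 w tw1 N1 hrW1 hfb (hcen _ htw1), skewMul_assoc, h12, skewMul_zero_right]
  have h14 : skewMul σ' (skewMul σ' (pw f W1) (skewMul σ' h g)) (Polynomial.C w).coeff = 0 :=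
    s3 hR (bf.pw' W1) (Bdd.C' w) (bh.skew bg) h13
  have h15 : skewMul σ' (pw f W1) (skewMul σ' h g) = 0 :=
    reg_cancel σ' Δ hcen hreg hΔσ w hw _ h14
  have h16 : skewMul σ' (skewMul σ' (pw f W1) h) g = 0 := by
    rw [skewMul_assoc]; exact h15
  set Cc := skewMul σ' (pw f W1) h with hCcdef
  have hCb : ∀ n, N3 < n → Cc n = 0 := by
    intro n hn
    exact skewMul_bound σ' _ _ N1 Nh (fun m hm => by rw [pw, hfb m hm, zero_mul]) hhb n (by omega)
  have bCc : Bdd Cc := (bf.pw' W1).skew bh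
  have h17 : skewMul σ' (skewMul σ' (pw Cc V2) (Polynomial.C v).coeff) g = 0 := by
    rw [resolve σ' Cc V2 v tv2 N3 hrV2 hCb (hcen _ htv2), skewMul_assoc, h16, skewMul_zero_right]
  have h18 : skewMul σ' (skewMul σ' (pw Cc V2) g) (Polynomial.C v).coeff = 0 :=
    s3 hR (bCc.pw' V2) (Bdd.C' v) bg h17
  exact reg_cancel σ' Δ hcen hreg hΔσ v hv _ h18

end LocAux

namespace LocAux

section ProdRange
variable {M : Type*} [Monoid M]

def prodRange (x : ℕ → M) (k : ℕ) : M := ((List.range k).map x).prod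

theorem prodRange_succ (x : ℕ → M) (k : ℕ) :
    prodRange x (k + 1) = prodRange x k * x k := by
  rw [prodRange, List.range_succ, List.map_append, List.prod_append]
  simp [prodRange]

theorem prodRange_add (x : ℕ → M) (a k : ℕ) :
    prodRange x (a + k) = prodRange x a * prodRange (fun j => x (a + j)) k := by
  induction k with
  | zero => simp [prodRange]
  | succ k ih =>
    rw [← Nat.add_assoc, prodRange_succ, ih, prodRange_succ, mul_assoc]

theorem prodRange_mem (Δ : Submonoid M) (x : ℕ → M) (hx : ∀ j, x j ∈ Δ) (k : ℕ) :
    prodRange x k ∈ Δ := by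
  induction k with
  | zero => exact Δ.one_mem
  | succ k ih => rw [prodRange_succ]; exact Δ.mul_mem ih (hx k)

end ProdRange

variable {R : Type*} [Ring R]

theorem adj (σ' : R →+* R) (Δ : Submonoid R)
    (hcen : ∀ u ∈ Δ, ∀ r : R, u * r = r * u)
    (hΔσ : ∀ u ∈ Δ, σ' u ∈ Δ)
    (v : R) (hv : v ∈ Δ) (N : ℕ) :
    ∃ (V : ℕ → R) (tv : R), tv ∈ Δ ∧ (∀ n, V n ∈ Δ) ∧
      (∀ n ≤ N, V n * (⇑σ')^[n] v = tv) := by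
  set x : ℕ → R := fun j => (⇑σ')^[j] v with hx
  have hxΔ : ∀ j, x j ∈ Δ := fun j => iterDelta σ' Δ hΔσ v hv j
  refine ⟨fun i => prodRange x i * prodRange (fun j => x (i + 1 + j)) (N - i),
      prodRange x (N + 1), prodRange_mem Δ x hxΔ _, fun n => Δ.mul_mem
        (prodRange_mem Δ x hxΔ _) (prodRange_mem Δ _ (fun j => hxΔ _) _), ?_⟩
  intro n hn
  have hBc : prodRange (fun j => x (n + 1 + j)) (N - n) * x n
      = x n * prodRange (fun j => x (n + 1 + j)) (N - n) :=
    hcen _ (hxΔ n) _ |>.symm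
  rw [mul_assoc, hBc, ← mul_assoc, ← prodRange_succ, ← prodRange_add]
  congr 1
  omega

theorem central_shuffle {T : Type*} [Ring T] (z1 z2 z3 p q : T)
    (h2 : ∀ t, z2 * t = t * z2) (h3 : ∀ t, z3 * t = t * z3) :
    z1 * (z2 * z3) * (p * q) = ((z1 * p) * z2) * (z3 * q) := by
  have e1 : z3 * (p * q) = p * (z3 * q) := by rw [← mul_assoc, h3 p, mul_assoc]
  have e2 : z2 * (p * (z3 * q)) = p * (z2 * (z3 * q)) := by
    rw [← mul_assoc, h2 p, mul_assoc]
  calc z1 * (z2 * z3) * (p * q) = z1 * (z2 * (z3 * (p * q))) := by simp [mul_assoc]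
    _ = z1 * (p * (z2 * (z3 * q))) := by rw [e1, e2]
    _ = ((z1 * p) * z2) * (z3 * q) := by simp [mul_assoc]

variable {T : Type*} [Ring T]

theorem clear1 (σ' : R →+* R) (τ' : T →+* T) (Δ : Submonoid R) (φ : R →+* T)
    (hcomm' : ∀ (i : ℕ) (r : R), (⇑τ')^[i] (φ r) = φ ((⇑σ')^[i] r))
    (hTcen : ∀ u ∈ Δ, ∀ t : T, φ u * t = t * φ u)
    (hΔσ : ∀ u ∈ Δ, σ' u ∈ Δ)
    (P Q : ℕ → T) (u v : R) (hu : u ∈ Δ) (hv : v ∈ Δ) (f g : ℕ → R)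
    (hP : ∀ n, φ u * P n = φ (f n)) (hQ : ∀ n, φ v * Q n = φ (g n))
    (N : ℕ) (hfN : ∀ n, N < n → f n = 0) (hPN : ∀ n, N < n → P n = 0)
    (V : ℕ → R) (tv : R) (hVΔ : ∀ n, V n ∈ Δ)
    (hres : ∀ n ≤ N, V n * (⇑σ')^[n] v = tv) :
    ∀ n, φ (u * tv) * skewMul τ' P Q n = φ (skewMul σ' (pw f V) g n) := by
  intro n
  show φ (u * tv) * ∑ i ∈ Finset.range (n + 1), P i * (⇑τ')^[i] (Q (n - i))
      = φ (∑ i ∈ Finset.range (n + 1), pw f V i * (⇑σ')^[i] (g (n - i)))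
  rw [Finset.mul_sum, map_sum]
  refine Finset.sum_congr rfl fun i _ => ?_
  rcases le_or_gt i N with h | h
  · have hkey : φ ((⇑σ')^[i] v) * (⇑τ')^[i] (Q (n - i)) = φ ((⇑σ')^[i] (g (n - i))) := by
      rw [← hcomm' i v, ← iterate_map_mul τ' i, hQ (n - i), hcomm']
    have hdec : φ (u * tv) = φ u * (φ (V i) * φ ((⇑σ')^[i] v)) := by
      rw [← hres i h, map_mul, map_mul]
    rw [hdec, central_shuffle _ _ _ _ _ (hTcen _ (hVΔ i))
        (hTcen _ (iterDelta σ' Δ hΔσ v hv i)), hP i, hkey, pw, map_mul, map_mul]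
  · simp [hPN i h, pw, hfN i h]

theorem commonDenom (Δ : Submonoid R) (φ : R →+* T)
    (hTcen : ∀ u ∈ Δ, ∀ t : T, φ u * t = t * φ u)
    (hgen : ∀ t : T, ∃ u ∈ Δ, ∃ r : R, φ u * t = φ r)
    (t : ℕ → T) (N : ℕ) (ht : ∀ n, N < n → t n = 0) :
    ∃ u ∈ Δ, ∃ c : ℕ → R, (∀ n, φ u * t n = φ (c n)) ∧ (∀ n, N < n → c n = 0) := by
  classical
  have step : ∀ k : ℕ, ∃ u ∈ Δ, ∀ i, i < k → ∃ r : R, φ u * t i = φ r := by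
    intro k; induction k with
    | zero => exact ⟨1, Δ.one_mem, fun i hi => absurd hi (Nat.not_lt_zero i)⟩
    | succ k ih =>
      obtain ⟨u, hu, H⟩ := ih
      obtain ⟨u', hu', r', hr'⟩ := hgen (t k)
      refine ⟨u' * u, Δ.mul_mem hu' hu, fun i hi => ?_⟩
      rcases Nat.lt_succ_iff_lt_or_eq.mp hi with h | h
      · obtain ⟨r, hr⟩ := H i h
        exact ⟨u' * r, by rw [map_mul, mul_assoc, hr, ← map_mul]⟩
      · subst h
        refine ⟨u * r', ?_⟩
        rw [map_mul, show φ u' * φ u = φ u * φ u' from hTcen u' hu' (φ u), mul_assoc,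
          hr', ← map_mul]
  obtain ⟨u, hu, H⟩ := step (N + 1)
  refine ⟨u, hu, fun n => if h : n ≤ N then (H n (by omega)).choose else 0, ?_, ?_⟩
  · intro n
    by_cases h : n ≤ N
    · simp only [dif_pos h]
      exact (H n (by omega)).choose_spec
    · simp only [dif_neg h]
      rw [ht n (by omega), mul_zero, map_zero]
  · intro n hn
    simp [Nat.not_le.mpr hn]

theorem map_skewMul (σ' : R →+* R) (τ' : T →+* T) (φ : R →+* T)
    (hcomm' : ∀ (i : ℕ) (r : R), (⇑τ')^[i] (φ r) = φ ((⇑σ')^[i] r))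
    (a b : ℕ → R) (n : ℕ) :
    φ (skewMul σ' a b n) = skewMul τ' (fun k => φ (a k)) (fun k => φ (b k)) n := by
  show φ (∑ i ∈ Finset.range (n + 1), a i * (⇑σ')^[i] (b (n - i)))
      = ∑ i ∈ Finset.range (n + 1), φ (a i) * (⇑τ')^[i] (φ (b (n - i)))
  rw [map_sum]
  exact Finset.sum_congr rfl fun i _ => by rw [map_mul, hcomm']

end LocAux


open LocAux

/-- Localization of a (possibly noncommutative) ring at a multiplicatively closed set `Δ`
of central regular elements, with the induced automorphism: `T` together with `φ : R →+* T`
is the ring `Δ⁻¹R` when `φ` is injective, the images of elements of `Δ` are central units,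
and every element of `T` has the form `φ(u)⁻¹ φ(r)` with `u ∈ Δ`. The automorphism `τ`
extends `σ` along `φ`. -/
theorem localization_stronglySkewSymmetric_iff
    {R : Type*} [Ring R] (σ : R ≃+* R) (Δ : Submonoid R)
    (hcen : ∀ u ∈ Δ, ∀ r : R, u * r = r * u)
    (hreg : ∀ u ∈ Δ, ∀ r : R, u * r = 0 → r = 0)
    (hΔσ : ∀ u, u ∈ Δ ↔ σ u ∈ Δ)
    {T : Type*} [Ring T] (φ : R →+* T) (hinj : Function.Injective φ)
    (τ : T ≃+* T) (hcomm : ∀ r : R, τ (φ r) = φ (σ r))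
    (hunit : ∀ u ∈ Δ, IsUnit (φ u))
    (hTcen : ∀ u ∈ Δ, ∀ t : T, φ u * t = t * φ u)
    (hgen : ∀ t : T, ∃ u ∈ Δ, ∃ r : R, φ u * t = φ r) :
    StronglySkewSymmetric R (σ : R →+* R) ↔
      StronglySkewSymmetric T (τ : T →+* T) := by
  classical
  set σ' : R →+* R := (σ : R →+* R) with hσ'def
  set τ' : T →+* T := (τ : T →+* T) with hτ'def
  have hΔσ' : ∀ u ∈ Δ, σ' u ∈ Δ := fun u hu => (hΔσ u).mp hu
  have hcomm' : ∀ (i : ℕ) (r : R), (⇑τ')^[i] (φ r) = φ ((⇑σ')^[i] r) := by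
    intro i
    induction i with
    | zero => intro r; rfl
    | succ k ih =>
      intro r
      rw [Function.iterate_succ_apply', Function.iterate_succ_apply', ih]
      exact hcomm _
  constructor
  · -- hard direction
    intro hRs P Q S h1
    obtain ⟨u, hu, f, hPf, hfb⟩ := commonDenom Δ φ hTcen hgen P.coeff P.natDegree
      (fun n hn => Polynomial.coeff_eq_zero_of_natDegree_lt hn)
    obtain ⟨v, hv, g, hQg, hgb⟩ := commonDenom Δ φ hTcen hgen Q.coeff Q.natDegree
      (fun n hn => Polynomial.coeff_eq_zero_of_natDegree_lt hn)
    obtain ⟨w, hw, h0, hSh, hhb⟩ := commonDenom Δ φ hTcen hgen S.coeff S.natDegree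
      (fun n hn => Polynomial.coeff_eq_zero_of_natDegree_lt hn)
    set N1 := P.natDegree
    set Ng := Q.natDegree
    set Nh := S.natDegree
    have hPb : ∀ n, N1 < n → P.coeff n = 0 :=
      fun n hn => Polynomial.coeff_eq_zero_of_natDegree_lt hn
    have hQb : ∀ n, Ng < n → Q.coeff n = 0 :=
      fun n hn => Polynomial.coeff_eq_zero_of_natDegree_lt hn
    have hSb : ∀ n, Nh < n → S.coeff n = 0 :=
      fun n hn => Polynomial.coeff_eq_zero_of_natDegree_lt hn
    obtain ⟨V1, tv1, htv1, hV1Δ, hrV1⟩ := adj σ' Δ hcen hΔσ' v hv N1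
    obtain ⟨W2, tw2, htw2, hW2Δ, hrW2⟩ := adj σ' Δ hcen hΔσ' w hw (N1 + Ng)
    obtain ⟨W1, tw1, htw1, hW1Δ, hrW1⟩ := adj σ' Δ hcen hΔσ' w hw N1
    obtain ⟨V2, tv2, htv2, hV2Δ, hrV2⟩ := adj σ' Δ hcen hΔσ' v hv (N1 + Nh)
    -- clear denominators along P * Q * S
    have E1 := clear1 σ' τ' Δ φ hcomm' hTcen hΔσ' P.coeff Q.coeff u v hu hv f g
      hPf hQg N1 hfb hPb V1 tv1 hV1Δ hrV1
    have hF : ∀ n, N1 + Ng < n → skewMul σ' (pw f V1) g n = 0 :=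
      skewMul_bound σ' _ _ N1 Ng (fun m hm => by rw [pw, hfb m hm, zero_mul]) hgb
    have hPQ : ∀ n, N1 + Ng < n → skewMul τ' P.coeff Q.coeff n = 0 :=
      skewMul_bound τ' _ _ N1 Ng hPb hQb
    have E2 := clear1 σ' τ' Δ φ hcomm' hTcen hΔσ' (skewMul τ' P.coeff Q.coeff) S.coeff
      (u * tv1) w (Δ.mul_mem hu htv1) hw (skewMul σ' (pw f V1) g) h0 E1 hSh
      (N1 + Ng) hF hPQ W2 tw2 hW2Δ hrW2
    have hGiven : skewMul σ' (pw (skewMul σ' (pw f V1) g) W2) h0 = 0 := by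
      funext n
      simp only [Pi.zero_apply]
      apply hinj
      rw [map_zero, ← E2 n, h1]
      simp
    have hTarget : skewMul σ' (pw (skewMul σ' (pw f W1) h0) V2) g = 0 :=
      chainLemma σ' Δ hcen hreg hΔσ' hRs f g h0 v w hv hw N1 Ng Nh (N1 + Ng) (N1 + Nh)
        le_rfl le_rfl hfb hgb hhb V1 W2 W1 V2 tv1 tw2 tw1 tv2 htv1 htw2 htw1 htv2
        hrV1 hrW2 hrW1 hrV2 hGiven
    -- clear denominators along P * S * Q
    have E3 := clear1 σ' τ' Δ φ hcomm' hTcen hΔσ' P.coeff S.coeff u w hu hw f h0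
      hPf hSh N1 hfb hPb W1 tw1 hW1Δ hrW1
    have hC : ∀ n, N1 + Nh < n → skewMul σ' (pw f W1) h0 n = 0 :=
      skewMul_bound σ' _ _ N1 Nh (fun m hm => by rw [pw, hfb m hm, zero_mul]) hhb
    have hPS : ∀ n, N1 + Nh < n → skewMul τ' P.coeff S.coeff n = 0 :=
      skewMul_bound τ' _ _ N1 Nh hPb hSb
    have E4 := clear1 σ' τ' Δ φ hcomm' hTcen hΔσ' (skewMul τ' P.coeff S.coeff) Q.coeff
      (u * tw1) v (Δ.mul_mem hu htw1) hv (skewMul σ' (pw f W1) h0) g E3 hQg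
      (N1 + Nh) hC hPS V2 tv2 hV2Δ hrV2
    funext n
    have hE := E4 n
    rw [hTarget] at hE
    simp only [Pi.zero_apply, map_zero] at hE
    have hun : IsUnit (φ ((u * tw1) * tv2)) :=
      hunit _ (Δ.mul_mem (Δ.mul_mem hu htw1) htv2)
    exact (hun.mul_right_eq_zero).mp hE
  · -- easy direction
    intro hT p q r h1
    have key : ∀ a b : ℕ → R,
        skewMul τ' (fun k => φ (a k)) (fun k => φ (b k)) = fun n => φ (skewMul σ' a b n) :=
      fun a b => funext fun n => (map_skewMul σ' τ' φ hcomm' a b n).symm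
    have hPm : (p.map φ).coeff = fun k => φ (p.coeff k) := funext fun k => Polynomial.coeff_map φ k
    have hQm : (q.map φ).coeff = fun k => φ (q.coeff k) := funext fun k => Polynomial.coeff_map φ k
    have hRm : (r.map φ).coeff = fun k => φ (r.coeff k) := funext fun k => Polynomial.coeff_map φ k
    have h1' : skewMul τ' (skewMul τ' (p.map φ).coeff (q.map φ).coeff) (r.map φ).coeff = 0 := by
      rw [hPm, hQm, hRm, key p.coeff q.coeff, key (skewMul σ' p.coeff q.coeff) r.coeff, h1]
      funext n
      simp
    have h2 := hT (p.map φ) (q.map φ) (r.map φ) h1'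
    rw [hPm, hQm, hRm, key p.coeff r.coeff, key (skewMul σ' p.coeff r.coeff) q.coeff] at h2
    funext n
    simp only [Pi.zero_apply]
    apply hinj
    rw [map_zero]
    exact congrFun h2 n
end

section
/- For a ring R with endomorphism σ extended coefficientwise to the Laurent polynomial ring, R[x] is strongly σ̄-symmetric if and only if R[x,x⁻¹] is strongly σ̄-symmetric. -/
open LaurentPolynomial in
/-- The coefficientwise extension of `σ` to the Laurent polynomial ring `R[T;T⁻¹]`. -/
noncomputable def laurentMap {R : Type*} [Ring R] (σ : R →+* R) :
    LaurentPolynomial R →+* LaurentPolynomial R :=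
  AddMonoidAlgebra.liftNCRingHom ((LaurentPolynomial.C (R := R)).comp σ)
    { toFun := fun n => LaurentPolynomial.T (Multiplicative.toAdd n)
      map_one' := LaurentPolynomial.T_zero (R := R)
      map_mul' := fun x y => LaurentPolynomial.T_add (R := R)
          (Multiplicative.toAdd x) (Multiplicative.toAdd y) }
    (fun x y => (LaurentPolynomial.commute_T _ _).symm)

open Polynomial Filter

section SkewMul

variable {S S' : Type*} [Ring S] [Ring S'] {τ : S →+* S} {τ' : S' →+* S'}

theorem Function.Injective.comp_eq_zero_iff {α : Type*} {φ : S →+* S'}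
    (hφ : Function.Injective φ) {f : α → S} : φ ∘ f = 0 ↔ f = 0 :=
  ⟨fun hf => hφ.comp_left (hf.trans (funext fun _ => (map_zero φ).symm)), fun hf => by simp [hf]⟩

theorem comp_skewMul {φ : S →+* S'} (h : Function.Semiconj φ τ τ') (p q : ℕ → S) :
    φ ∘ skewMul τ p q = skewMul τ' (φ ∘ p) (φ ∘ q) := by
  funext n
  simp only [Function.comp_apply, skewMul, map_sum, map_mul, (h.iterate_right _).eq]

theorem comp_skewMul_skewMul {φ : S →+* S'} (h : Function.Semiconj φ τ τ') (p q r : ℕ → S) :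
    φ ∘ skewMul τ (skewMul τ p q) r = skewMul τ' (skewMul τ' (φ ∘ p) (φ ∘ q)) (φ ∘ r) := by
  rw [comp_skewMul h, comp_skewMul h]

theorem skewMul_mul_left {v : S'} (hv : ∀ x, Commute v x) (hτv : τ' v = v)
    (u : S') (p q : ℕ → S') :
    skewMul τ' (fun i => u * p i) (fun i => v * q i) = fun n => u * v * skewMul τ' p q n := by
  funext n
  simp only [skewMul, Finset.mul_sum, iterate_map_mul, Function.iterate_fixed hτv, mul_assoc,
    (hv _).left_comm]

theorem skewMul_skewMul_mul_left {v w : S'} (hv : ∀ x, Commute v x) (hτv : τ' v = v)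
    (hw : ∀ x, Commute w x) (hτw : τ' w = w) (u : S') (p q r : ℕ → S') :
    skewMul τ' (skewMul τ' (fun i => u * p i) (fun i => v * q i)) (fun i => w * r i) =
      fun n => u * v * w * skewMul τ' (skewMul τ' p q) r n := by
  rw [skewMul_mul_left hv hτv, skewMul_mul_left hw hτw]

theorem StronglySkewSymmetric.of_injective {φ : S →+* S'} (hφ : Function.Injective φ)
    (h : Function.Semiconj φ τ τ') (hS' : StronglySkewSymmetric S' τ') :
    StronglySkewSymmetric S τ := by
  have hcoeff : ∀ p : S[X], (p.map φ).coeff = φ ∘ p.coeff := fun p => funext (coeff_map φ)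
  intro p q r hpqr
  have hmap := hS' (p.map φ) (q.map φ) (r.map φ)
  rw [hcoeff, hcoeff, hcoeff, ← comp_skewMul_skewMul h, ← comp_skewMul_skewMul h,
    hφ.comp_eq_zero_iff, hφ.comp_eq_zero_iff] at hmap
  exact hmap hpqr

theorem StronglySkewSymmetric.of_mul_mem_lifts {φ : S →+* S'} (hφ : Function.Injective φ)
    (h : Function.Semiconj φ τ τ') (hS : StronglySkewSymmetric S τ)
    (hden : ∀ P : S'[X], ∃ u : S', IsLeftRegular u ∧ (∀ x, Commute u x) ∧ τ' u = u ∧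
      C u * P ∈ lifts φ) :
    StronglySkewSymmetric S' τ' := by
  have hlift : ∀ P : S'[X], ∃ u : S', IsLeftRegular u ∧ (∀ x, Commute u x) ∧ τ' u = u ∧
      ∃ p : S[X], φ ∘ p.coeff = fun i => u * P.coeff i := by
    intro P
    obtain ⟨u, hu, hcu, hτu, p, hp⟩ := hden P
    rw [coe_mapRingHom] at hp
    exact ⟨u, hu, hcu, hτu, p, funext fun i => by rw [Function.comp_apply, ← coeff_map, hp,
      coeff_C_mul]⟩
  intro P Q R hPQR
  obtain ⟨u, hu, -, -, p, hp⟩ := hlift P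
  obtain ⟨v, hv, hcv, hτv, q, hq⟩ := hlift Q
  obtain ⟨w, hw, hcw, hτw, r, hr⟩ := hlift R
  have hpqr : skewMul τ (skewMul τ p.coeff q.coeff) r.coeff = 0 := by
    rw [← hφ.comp_eq_zero_iff, comp_skewMul_skewMul h, hp, hq, hr,
      skewMul_skewMul_mul_left hcv hτv hcw hτw, hPQR]
    exact funext fun _ => mul_zero _
  have hprq := hS p q r hpqr
  rw [← hφ.comp_eq_zero_iff, comp_skewMul_skewMul h, hp, hr, hq,
    skewMul_skewMul_mul_left hcw hτw hcv hτv] at hprq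
  funext n
  exact ((hu.mul hw).mul hv).mul_left_eq_zero_iff.1 (congrFun hprq n)

end SkewMul

namespace LaurentPolynomial

variable {R : Type*} [Ring R]

theorem laurentMap_single (σ : R →+* R) (n : ℤ) (r : R) :
    laurentMap σ (AddMonoidAlgebra.single n r) = C (σ r) * T n := by
  unfold laurentMap
  rw [AddMonoidAlgebra.liftNCRingHom_single]
  rfl

theorem laurentMap_C (σ : R →+* R) (r : R) : laurentMap σ (C r) = C (σ r) := by
  rw [← single_eq_C, laurentMap_single, T_zero, mul_one]

theorem laurentMap_T (σ : R →+* R) (n : ℤ) : laurentMap σ (T n) = T n := by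
  rw [T, laurentMap_single, map_one, map_one, one_mul]
  rfl

theorem laurentMap_comp_toLaurent (σ : R →+* R) :
    (laurentMap σ).comp toLaurent = toLaurent.comp (mapRingHom σ) := by
  apply Polynomial.ringHom_ext
  · intro a
    simp [laurentMap_C]
  · simp [laurentMap_T]

theorem semiconj_toLaurent_laurentMap (σ : R →+* R) :
    Function.Semiconj toLaurent (mapRingHom σ) (laurentMap σ) := fun f =>
  (DFunLike.congr_fun (laurentMap_comp_toLaurent σ) f).symm

theorem eventually_T_mul_mem_range_toLaurent (a : R[T;T⁻¹]) :
    ∀ᶠ m : ℕ in atTop, T m * a ∈ Set.range (toLaurent (R := R)) := by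
  obtain ⟨n, f, hf⟩ := a.exists_T_pow
  filter_upwards [eventually_ge_atTop n] with m hm
  refine ⟨X ^ (m - n) * f, ?_⟩
  rw [map_mul, toLaurent_X_pow, hf, ← (commute_T _ a).eq, ← mul_assoc, ← T_add]
  congr 2
  omega

theorem exists_C_T_mul_mem_lifts_toLaurent (P : Polynomial R[T;T⁻¹]) :
    ∃ n : ℕ, Polynomial.C (T n) * P ∈ lifts (toLaurent (R := R)) := by
  obtain ⟨n, hn⟩ := ((eventually_all_finset P.support).2 fun i _ =>
    eventually_T_mul_mem_range_toLaurent (P.coeff i)).exists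
  refine ⟨n, (lifts_iff_coeff_lifts _).2 fun i => ?_⟩
  rw [coeff_C_mul]
  by_cases hi : i ∈ P.support
  · exact hn i hi
  · rw [notMem_support_iff.1 hi, mul_zero]
    exact ⟨0, map_zero _⟩

end LaurentPolynomial

open LaurentPolynomial in
theorem polynomial_iff_laurent_stronglySkewSymmetric
    {R : Type*} [Ring R] (σ : R →+* R) :
    StronglySkewSymmetric (Polynomial R) (Polynomial.mapRingHom σ) ↔
      StronglySkewSymmetric (LaurentPolynomial R) (laurentMap σ) := by
  refine ⟨fun h => h.of_mul_mem_lifts toLaurent_injective (semiconj_toLaurent_laurentMap σ)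
    fun P => ?_, fun h => h.of_injective toLaurent_injective (semiconj_toLaurent_laurentMap σ)⟩
  obtain ⟨n, hn⟩ := exists_C_T_mul_mem_lifts_toLaurent P
  exact ⟨T n, (isUnit_T _).isRegular.left, fun x => commute_T _ x, laurentMap_T σ n, hn⟩
end

section
/- Let R be a ring with endomorphism σ and I a σ-stable ideal of R. If R/I is strongly σ̄-symmetric and I, as a (possibly nonunital) ring, is σ-rigid (i.e., a·σ(a) = 0 implies a = 0 for a ∈ I, so that I[x;σ] is reduced), then R is strongly σ-symmetric. -/
section Aux

variable {R : Type*} [Ring R] (σ : R →+* R)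

lemma skewMul_def (p q : ℕ → R) (n : ℕ) :
    skewMul σ p q n = ∑ i ∈ Finset.range (n + 1), p i * (σ ^ i) (q (n - i)) := rfl

lemma skewMul_zero_left (p : ℕ → R) : skewMul σ (0 : ℕ → R) p = 0 := by
  funext n
  simp [skewMul]

lemma skewMul_zero_right (p : ℕ → R) : skewMul σ p (0 : ℕ → R) = 0 := by
  funext n
  simp [skewMul]

lemma skewMul_assoc (p q r : ℕ → R) :
    skewMul σ (skewMul σ p q) r = skewMul σ p (skewMul σ q r) := by
  funext n
  simp only [skewMul_def]
  calc
    ∑ i ∈ Finset.range (n + 1),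
        (∑ a ∈ Finset.range (i + 1), p a * (σ ^ a) (q (i - a))) * (σ ^ i) (r (n - i))
      = ∑ i ∈ Finset.range (n + 1), ∑ a ∈ Finset.range (i + 1),
          p a * (σ ^ a) (q (i - a)) * (σ ^ i) (r (n - i)) := by
        refine Finset.sum_congr rfl fun i _ => ?_
        rw [Finset.sum_mul]
    _ = ∑ a ∈ Finset.range (n + 1), ∑ j ∈ Finset.range (n - a + 1),
          p a * ((σ ^ a) (q j) * (σ ^ a) ((σ ^ j) (r (n - a - j)))) := by
        rw [Finset.sum_sigma', Finset.sum_sigma']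
        refine Finset.sum_nbij' (fun x => (⟨x.2, x.1 - x.2⟩ : Σ _ : ℕ, ℕ))
          (fun x => (⟨x.1 + x.2, x.1⟩ : Σ _ : ℕ, ℕ)) ?_ ?_ ?_ ?_ ?_
        · rintro ⟨i, a⟩ hx
          simp only [Finset.mem_sigma, Finset.mem_range] at hx ⊢
          omega
        · rintro ⟨a, j⟩ hx
          simp only [Finset.mem_sigma, Finset.mem_range] at hx ⊢
          omega
        · rintro ⟨i, a⟩ hx
          simp only [Finset.mem_sigma, Finset.mem_range] at hx
          dsimp only
          have h : a + (i - a) = i := by omega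
          rw [h]
        · rintro ⟨a, j⟩ hx
          simp only [Finset.mem_sigma, Finset.mem_range] at hx
          dsimp only
          have h : a + j - a = j := by omega
          rw [h]
        · rintro ⟨i, a⟩ hx
          simp only [Finset.mem_sigma, Finset.mem_range] at hx
          obtain ⟨hi, ha⟩ := hx
          dsimp only
          have ha' : a ≤ i := by omega
          have h1 : (σ ^ a) ((σ ^ (i - a)) (r (n - a - (i - a)))) = (σ ^ i) (r (n - i)) := by
            have h2 : n - a - (i - a) = n - i := by omega
            rw [h2, ← RingHom.comp_apply, ← RingHom.mul_def, ← pow_add,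
              Nat.add_sub_cancel' ha']
          rw [mul_assoc, h1]
    _ = ∑ a ∈ Finset.range (n + 1),
          p a * (σ ^ a) (∑ j ∈ Finset.range (n - a + 1), q j * (σ ^ j) (r (n - a - j))) := by
        refine Finset.sum_congr rfl fun a _ => ?_
        rw [map_sum, Finset.mul_sum]
        exact Finset.sum_congr rfl fun j _ => by rw [map_mul]

lemma one_skewMul (p : ℕ → R) : skewMul σ (1 : Polynomial R).coeff p = p := by
  funext n
  rw [skewMul_def, Finset.sum_eq_single 0]
  · simp
  · intro b _ hb
    simp [Polynomial.coeff_one, hb]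
  · intro h
    exact absurd (Finset.mem_range.mpr (Nat.succ_pos n)) h

lemma skewMul_one (p : ℕ → R) : skewMul σ p (1 : Polynomial R).coeff = p := by
  funext n
  rw [skewMul_def, Finset.sum_eq_single n]
  · simp
  · intro b hb hbn
    have : n - b ≠ 0 := by
      simp only [Finset.mem_range] at hb
      omega
    simp [Polynomial.coeff_one, this]
  · intro h
    exact absurd (Finset.self_mem_range_succ n) h

/-- The skew product of two polynomials, as a polynomial. -/
noncomputable def skewPoly (p q : Polynomial R) : Polynomial R :=
  ∑ i ∈ p.support, Polynomial.C (p.coeff i) * (q.map (σ ^ i)) * Polynomial.X ^ i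

lemma coeff_skewPoly (p q : Polynomial R) :
    (skewPoly σ p q).coeff = skewMul σ p.coeff q.coeff := by
  funext n
  rw [skewPoly, Polynomial.finset_sum_coeff]
  have hterm : ∀ i, (Polynomial.C (p.coeff i) * (q.map (σ ^ i)) * Polynomial.X ^ i).coeff n
      = if i ≤ n then p.coeff i * (σ ^ i) (q.coeff (n - i)) else 0 := by
    intro i
    rw [Polynomial.coeff_mul_X_pow', Polynomial.coeff_C_mul, Polynomial.coeff_map]
  calc
    ∑ i ∈ p.support, (Polynomial.C (p.coeff i) * (q.map (σ ^ i)) * Polynomial.X ^ i).coeff n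
      = ∑ i ∈ p.support ∪ Finset.range (n + 1),
          if i ≤ n then p.coeff i * (σ ^ i) (q.coeff (n - i)) else 0 := by
        rw [← Finset.sum_congr rfl fun i _ => hterm i]
        refine Finset.sum_subset Finset.subset_union_left fun x _ hx => ?_
        rw [hterm x, Polynomial.notMem_support_iff.mp hx]
        simp
    _ = ∑ i ∈ (p.support ∪ Finset.range (n + 1)) ∩ Finset.range (n + 1),
          p.coeff i * (σ ^ i) (q.coeff (n - i)) := by
        rw [← Finset.sum_ite_mem]
        refine Finset.sum_congr rfl fun i _ => ?_
        congr 1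
        simp [Nat.lt_succ_iff]
    _ = skewMul σ p.coeff q.coeff n := by
        rw [Finset.union_inter_cancel_right, skewMul_def]

variable (I : TwoSidedIdeal R)

lemma iter_mem (hσI : ∀ a ∈ I, σ a ∈ I) {a : R} (ha : a ∈ I) (i : ℕ) : (σ ^ i) a ∈ I := by
  induction i with
  | zero => simpa using ha
  | succ k ih =>
    have : (σ ^ (k + 1)) a = σ ((σ ^ k) a) := by
      rw [RingHom.coe_pow, Function.iterate_succ_apply']
      rfl
    rw [this]
    exact hσI _ ih

lemma skewMul_mem_left {A : ℕ → R} (hA : ∀ n, A n ∈ I) (B : ℕ → R) (n : ℕ) :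
    skewMul σ A B n ∈ I := by
  rw [skewMul_def]
  exact sum_mem fun i _ => I.mul_mem_right _ _ (hA i)

lemma skewMul_mem_right (hσI : ∀ a ∈ I, σ a ∈ I) {B : ℕ → R} (hB : ∀ n, B n ∈ I)
    (A : ℕ → R) (n : ℕ) : skewMul σ A B n ∈ I := by
  rw [skewMul_def]
  exact sum_mem fun i _ => I.mul_mem_left _ _ (iter_mem σ I hσI (hB _) i)

section Rigid

variable (hσI : ∀ a ∈ I, σ a ∈ I) (hrigid : ∀ a ∈ I, a * σ a = 0 → a = 0)

include hrigid in
lemma rigid_sq : ∀ a ∈ I, a * a = 0 → a = 0 := by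
  intro a ha h
  apply hrigid a ha
  apply hrigid _ (I.mul_mem_right _ _ ha)
  have h2 : σ a * σ a = 0 := by rw [← map_mul, h, map_zero]
  calc a * σ a * σ (a * σ a) = a * ((σ a * σ a) * σ (σ a)) := by
        rw [map_mul, mul_assoc, ← mul_assoc (σ a)]
    _ = 0 := by rw [h2, zero_mul, mul_zero]

include hσI hrigid in
lemma rigid_iter : ∀ k : ℕ, ∀ a ∈ I, a * (σ ^ k) a = 0 → a = 0 := by
  intro k
  induction k with
  | zero =>
    intro a ha h
    exact rigid_sq σ I hrigid a ha (by simpa using h)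
  | succ k ih =>
    intro a ha h
    set x := (σ ^ (k + 1)) a with hxdef
    have s1 : x * a = 0 := by
      apply rigid_sq σ I hrigid _ (I.mul_mem_left _ _ ha)
      calc x * a * (x * a) = x * ((a * x) * a) := by
            rw [mul_assoc, ← mul_assoc a]
        _ = 0 := by rw [h, zero_mul, mul_zero]
    have s2 : x * σ a = 0 := by
      apply hrigid _ (I.mul_mem_left _ _ (hσI a ha))
      have hσ2 : σ a * σ x = 0 := by rw [← map_mul, h, map_zero]
      calc x * σ a * σ (x * σ a) = x * ((σ a * σ x) * σ (σ a)) := by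
            rw [map_mul, mul_assoc, ← mul_assoc (σ a)]
        _ = 0 := by rw [hσ2, zero_mul, mul_zero]
    have s3 : σ a * x = 0 := by
      apply rigid_sq σ I hrigid _ (I.mul_mem_right _ _ (hσI a ha))
      calc σ a * x * (σ a * x) = σ a * ((x * σ a) * x) := by
            rw [mul_assoc, ← mul_assoc x]
        _ = 0 := by rw [s2, zero_mul, mul_zero]
    apply ih a ha
    apply hrigid _ (I.mul_mem_right _ _ ha)
    have hx' : σ ((σ ^ k) a) = x := by
      rw [hxdef, RingHom.coe_pow, RingHom.coe_pow, Function.iterate_succ_apply']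
    calc a * (σ ^ k) a * σ (a * (σ ^ k) a)
        = a * (σ ^ k) a * (σ a * x) := by rw [map_mul, hx']
      _ = 0 := by rw [s3, mul_zero]

include hσI hrigid in
lemma skew_reduced (v : ℕ → R) (hv : ∀ n, v n ∈ I) (hvv : skewMul σ v v = 0) :
    v = 0 := by
  have key : ∀ n, v n = 0 := by
    intro n
    induction n using Nat.strong_induction_on with
    | _ n ih =>
    have hkey : v n * (σ ^ n) (v n) = 0 := by
      have h2 : skewMul σ v v (n + n) = 0 := by rw [hvv]; rfl
      rw [skewMul_def, Finset.sum_eq_single n] at h2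
      · rwa [Nat.add_sub_cancel] at h2
      · intro b hb hbn
        simp only [Finset.mem_range] at hb
        rcases Nat.lt_or_ge b n with hlt | hge
        · rw [ih b hlt, zero_mul]
        · have hlt2 : n + n - b < n := by omega
          rw [ih _ hlt2, map_zero, mul_zero]
      · intro hn
        exact absurd (Finset.mem_range.mpr (by omega)) hn
    exact rigid_iter σ I hσI hrigid n (v n) (hv n) hkey
  funext n
  exact key n

end Rigid

end Aux

theorem stronglySkewSymmetric_of_quotient_and_rigid_ideal
    {R : Type*} [Ring R] (σ : R →+* R) (I : TwoSidedIdeal R)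
    (hσI : ∀ a ∈ I, σ a ∈ I)
    (hquot : StronglySkewSymmetricMod σ (I : Set R))
    (hrigid : ∀ a ∈ I, a * σ a = 0 → a = 0) :
    StronglySkewSymmetric R σ := by
  intro p q r h0
  set F := p.coeff with hF
  set G := q.coeff with hG
  set H := r.coeff with hH
  -- membership of (F⋆H)⋆G in I
  have m_u : ∀ n, skewMul σ (skewMul σ F H) G n ∈ I := by
    intro n
    have := hquot p q r (fun n => by rw [← hF, ← hG, ← hH, h0]; exact I.zero_mem) n
    simpa using this
  -- membership of (G⋆H)⋆F in I
  have m_w1 : ∀ n, skewMul σ (skewMul σ G H) F n ∈ I := by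
    intro n
    have := hquot 1 p (skewPoly σ q r) (fun n => by
      rw [coeff_skewPoly, one_skewMul, ← hG, ← hH, ← hF, ← skewMul_assoc, h0]
      exact I.zero_mem) n
    rw [coeff_skewPoly, one_skewMul, ← hG, ← hH, ← hF] at this
    simpa using this
  -- (G⋆H)⋆F = 0
  have z_w1 : skewMul σ (skewMul σ G H) F = 0 := by
    apply skew_reduced σ I hσI hrigid _ m_w1
    have e : skewMul σ (skewMul σ (skewMul σ G H) F) (skewMul σ (skewMul σ G H) F)
        = skewMul σ G (skewMul σ H (skewMul σ (skewMul σ (skewMul σ F G) H) F)) := by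
      simp only [skewMul_assoc]
    rw [e, h0, skewMul_zero_left, skewMul_zero_right, skewMul_zero_right]
  -- ((F⋆H)⋆G)⋆H = 0
  have z_w3 : skewMul σ (skewMul σ (skewMul σ F H) G) H = 0 := by
    apply skew_reduced σ I hσI hrigid
    · exact fun n => skewMul_mem_left σ I m_u H n
    · have e : skewMul σ (skewMul σ (skewMul σ (skewMul σ F H) G) H)
          (skewMul σ (skewMul σ (skewMul σ F H) G) H)
          = skewMul σ (skewMul σ F H)
            (skewMul σ (skewMul σ (skewMul σ G H) F) (skewMul σ (skewMul σ H G) H)) := by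
        simp only [skewMul_assoc]
      rw [e, z_w1, skewMul_zero_left, skewMul_zero_right]
  -- H⋆((F⋆H)⋆G) = 0
  have z_vu : skewMul σ H (skewMul σ (skewMul σ F H) G) = 0 := by
    apply skew_reduced σ I hσI hrigid
    · exact fun n => skewMul_mem_right σ I hσI m_u H n
    · have e : skewMul σ (skewMul σ H (skewMul σ (skewMul σ F H) G))
          (skewMul σ H (skewMul σ (skewMul σ F H) G))
          = skewMul σ H (skewMul σ (skewMul σ (skewMul σ (skewMul σ F H) G) H)
              (skewMul σ (skewMul σ F H) G)) := by
        simp only [skewMul_assoc]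
      rw [e, z_w3, skewMul_zero_left, skewMul_zero_right]
  -- ((F⋆H)⋆G)⋆(F⋆H) = 0
  have z_w4 : skewMul σ (skewMul σ (skewMul σ F H) G) (skewMul σ F H) = 0 := by
    apply skew_reduced σ I hσI hrigid
    · exact fun n => skewMul_mem_left σ I m_u _ n
    · have e : skewMul σ (skewMul σ (skewMul σ (skewMul σ F H) G) (skewMul σ F H))
          (skewMul σ (skewMul σ (skewMul σ F H) G) (skewMul σ F H))
          = skewMul σ (skewMul σ (skewMul σ (skewMul σ F H) G) F)
              (skewMul σ (skewMul σ H (skewMul σ (skewMul σ F H) G)) (skewMul σ F H)) := by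
        simp only [skewMul_assoc]
      rw [e, z_vu, skewMul_zero_left, skewMul_zero_right]
  -- conclude
  apply skew_reduced σ I hσI hrigid _ m_u
  have e : skewMul σ (skewMul σ (skewMul σ F H) G) (skewMul σ (skewMul σ F H) G)
      = skewMul σ (skewMul σ (skewMul σ (skewMul σ F H) G) (skewMul σ F H)) G := by
    simp only [skewMul_assoc]
  rw [e, z_w4, skewMul_zero_left]
end

section
/- In a reduced (nonunital) ring T, if pqr = 0 and all products of p, q, r in any order lie in T and T is symmetric and reversible, then prq = 0; consequently, if prq lies in a reduced subring containing all products, pqr = 0 implies (prq)³ = 0 and hence prq = 0. -/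
/-- Key computational step: if all triple products of `p, q, r` lie in a reduced
(nonunital) subring `T` that is an ideal, is symmetric and reversible, then
`pqr = 0` implies `(prq)³ = 0` and hence `prq = 0`. -/
theorem prq_eq_zero_of_pqr_eq_zero
    {A : Type*} [Ring A] (T : NonUnitalSubring A)
    (hred : ∀ x ∈ T, x * x = 0 → x = 0)
    (hleft : ∀ a : A, ∀ x ∈ T, a * x ∈ T)
    (hright : ∀ a : A, ∀ x ∈ T, x * a ∈ T)
    (hsymT : ∀ x y z : A, x ∈ T → y ∈ T → z ∈ T → x * y * z = 0 → x * z * y = 0)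
    (hrevT : ∀ x y : A, x ∈ T → y ∈ T → x * y = 0 → y * x = 0)
    (p q r : A)
    (h1 : p * q * r ∈ T) (h2 : p * r * q ∈ T) (h3 : q * p * r ∈ T)
    (h4 : q * r * p ∈ T) (h5 : r * p * q ∈ T) (h6 : r * q * p ∈ T)
    (h0 : p * q * r = 0) :
    (p * r * q) * (p * r * q) * (p * r * q) = 0 ∧ p * r * q = 0 := by
  -- Step 1: qrp = 0, since (qrp)² = qr(pqr)p = 0.
  have hqrp : q * r * p = 0 := by
    apply hred _ h4
    calc (q * r * p) * (q * r * p) = (q * r) * (p * q * r) * p := by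
          simp only [mul_assoc]
      _ = 0 := by rw [h0, mul_zero, zero_mul]
  -- Step 2: prqr = 0, since (prqr)² = pr(qrp)rqr = 0.
  have hprqr : p * r * q * r = 0 := by
    apply hred _ (hright r _ h2)
    calc (p * r * q * r) * (p * r * q * r)
        = (p * r) * (q * r * p) * (r * (q * r)) := by simp only [mul_assoc]
      _ = 0 := by rw [hqrp, mul_zero, zero_mul]
  -- Step 3: rqprq = 0, since (rqprq)² = rq(prqr)qprq = 0.
  have h5w : r * q * p * r * q = 0 := by
    apply hred _ (hright q _ (hright r _ h6))
    calc (r * q * p * r * q) * (r * q * p * r * q)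
        = (r * q) * (p * r * q * r) * (q * (p * (r * q))) := by simp only [mul_assoc]
      _ = 0 := by rw [hprqr, mul_zero, zero_mul]
  -- Step 4: prq = 0, since (prq)² = p(rqprq) = 0.
  have hprq : p * r * q = 0 := by
    apply hred _ h2
    calc (p * r * q) * (p * r * q) = p * (r * q * p * r * q) := by
          simp only [mul_assoc]
      _ = 0 := by rw [h5w, mul_zero]
  exact ⟨by rw [hprq, zero_mul, zero_mul], hprq⟩
end

section
/- Let R be an algebra over a commutative domain S and σ an S-algebra endomorphism of R. Then R is strongly σ-symmetric if and only if the Dorroh extension D = R ⊕ S, with multiplication (r₁,s₁)(r₂,s₂) = (r₁r₂ + s₁r₂ + s₂r₁, s₁s₂) and endomorphism σ̄(r,s) = (σ(r), s), is strongly σ̄-symmetric. -/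
/-- The extension `σ̄(r, s) = (σ r, s)` of an `S`-algebra endomorphism `σ` of `R` to the
Dorroh extension (unitization) `D = R ⊕ S`. -/
noncomputable def dorrohMap {S R : Type*} [CommRing S] [Ring R] [Algebra S R]
    (σ : R →ₐ[S] R) : Unitization S R →+* Unitization S R :=
  (Unitization.lift ((Unitization.inrNonUnitalAlgHom S R).comp σ.toNonUnitalAlgHom)).toRingHom

/-!
As `R` is unital, `(s, r) ↦ (s, s • 1 + r)` embeds the Dorroh extension `D` into the product
ring `S × R`, intertwining `σ̄` with `id × σ`; and `r ↦ (0, r)` embeds `R` into `D`, intertwining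
`σ` with `σ̄`. A relation `fgh = 0` between skew polynomials is carried along such an embedding
and reflected by its injectivity, so strong symmetry passes to subrings. It also passes to
products, componentwise, and `S[x]` is commutative. Hence `R` ⇒ `S × R` ⇒ `D` ⇒ `R`.
-/

open Polynomial Function

section SkewMul

variable {R R' F : Type*} [Ring R] [Ring R'] [FunLike F R R'] [NonUnitalRingHomClass F R R']
  {σ : R →+* R} {σ' : R' →+* R'}

theorem comp_skewMul_s18 (f : F) (h : Semiconj f σ σ') (p q : ℕ → R) :
    f ∘ skewMul σ p q = skewMul σ' (f ∘ p) (f ∘ q) := by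
  funext n
  simp only [skewMul, comp_apply, map_sum, map_mul, (h.iterate_right _).eq]

theorem comp_skewMul_skewMul_s18 (f : F) (h : Semiconj f σ σ') (p q r : ℕ → R) :
    f ∘ skewMul σ (skewMul σ p q) r = skewMul σ' (skewMul σ' (f ∘ p) (f ∘ q)) (f ∘ r) := by
  rw [comp_skewMul_s18 f h, comp_skewMul_s18 f h]

theorem skewMul_id_coeff (p q : R[X]) :
    skewMul (RingHom.id R) p.coeff q.coeff = (p * q).coeff := by
  funext n
  simp [skewMul, coeff_mul, Finset.Nat.sum_antidiagonal_eq_sum_range_succ_mk]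

end SkewMul

-- Replaces `Polynomial.map` for the non-unital embedding `R → Unitization S R`.
theorem Polynomial.exists_coeff_eq_comp {R R' : Type*} [Semiring R] [Semiring R'] (f : R → R')
    (hf : f 0 = 0) (p : R[X]) : ∃ q : R'[X], q.coeff = f ∘ p.coeff :=
  ⟨p.sum fun n a => monomial n (f a), by
    ext n
    simp only [Polynomial.sum_def, finsetSum_coeff, coeff_monomial, Finset.sum_ite_eq',
      comp_apply]
    split_ifs with h
    · rfl
    · rw [notMem_support_iff.mp h, hf]⟩

namespace StronglySkewSymmetric

variable {R R' : Type*} [Ring R] [Ring R'] {σ : R →+* R} {σ' : R' →+* R'}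

theorem comp_swap_eq_zero {F : Type*} [FunLike F R R'] [NonUnitalRingHomClass F R R']
    (hR' : StronglySkewSymmetric R' σ') (f : F) (h : Semiconj f σ σ') {p q r : R[X]}
    (hpqr : skewMul σ (skewMul σ p.coeff q.coeff) r.coeff = 0) :
    f ∘ skewMul σ (skewMul σ p.coeff r.coeff) q.coeff = 0 := by
  obtain ⟨p', hp'⟩ := exists_coeff_eq_comp f (map_zero f) p
  obtain ⟨q', hq'⟩ := exists_coeff_eq_comp f (map_zero f) q
  obtain ⟨r', hr'⟩ := exists_coeff_eq_comp f (map_zero f) r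
  have hpqr' : skewMul σ' (skewMul σ' p'.coeff q'.coeff) r'.coeff = 0 := by
    rw [hp', hq', hr', ← comp_skewMul_skewMul_s18 f h, hpqr]
    funext n
    exact map_zero f
  rw [comp_skewMul_skewMul_s18 f h, ← hp', ← hq', ← hr']
  exact hR' p' q' r' hpqr'

theorem of_injective_s18 {F : Type*} [FunLike F R R'] [NonUnitalRingHomClass F R R'] (f : F)
    (hf : Injective f) (h : Semiconj f σ σ') (hR' : StronglySkewSymmetric R' σ') :
    StronglySkewSymmetric R σ := by
  intro p q r hpqr
  funext n
  exact hf ((congrFun (hR'.comp_swap_eq_zero f h hpqr) n).trans (map_zero f).symm)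

theorem id_of_commRing (R : Type*) [CommRing R] : StronglySkewSymmetric R (RingHom.id R) := by
  intro p q r h
  rw [skewMul_id_coeff, skewMul_id_coeff] at h ⊢
  rwa [mul_right_comm]

theorem prodMap {A B : Type*} [Ring A] [Ring B] {α : A →+* A} {β : B →+* B}
    (hA : StronglySkewSymmetric A α) (hB : StronglySkewSymmetric B β) :
    StronglySkewSymmetric (A × B) (α.prodMap β) := by
  intro p q r hpqr
  funext n
  exact Prod.ext (congrFun (hA.comp_swap_eq_zero (RingHom.fst A B) (fun _ => rfl) hpqr) n)
    (congrFun (hB.comp_swap_eq_zero (RingHom.snd A B) (fun _ => rfl) hpqr) n)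

end StronglySkewSymmetric

namespace Unitization

noncomputable def toProdAlgHom (S R : Type*) [CommRing S] [Ring R] [Algebra S R] :
    Unitization S R →ₐ[S] S × R :=
  lift (NonUnitalAlgHom.inr S S R)

theorem toProdAlgHom_injective (S R : Type*) [CommRing S] [Ring R] [Algebra S R] :
    Injective (toProdAlgHom S R) := by
  intro x y hxy
  have hfst : x.fst = y.fst := by simpa [toProdAlgHom] using congrArg Prod.fst hxy
  have hsnd : x.snd = y.snd := by simpa [toProdAlgHom, hfst] using congrArg Prod.snd hxy
  exact Unitization.ext hfst hsnd

end Unitization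

theorem semiconj_toProdAlgHom_dorrohMap {S R : Type*} [CommRing S] [Ring R] [Algebra S R]
    (σ : R →ₐ[S] R) :
    Semiconj (Unitization.toProdAlgHom S R) (dorrohMap σ)
      ((RingHom.id S).prodMap σ.toRingHom) := by
  intro x
  ext
  · simp [Unitization.toProdAlgHom, dorrohMap, Unitization.algebraMap_eq_inl]
  · simp [Unitization.toProdAlgHom, dorrohMap, Unitization.algebraMap_eq_inl]
    rfl

theorem semiconj_inr_dorrohMap {S R : Type*} [CommRing S] [Ring R] [Algebra S R]
    (σ : R →ₐ[S] R) :
    Semiconj (Unitization.inrNonUnitalAlgHom S R) σ (dorrohMap σ) := by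
  intro x
  simp [dorrohMap]
  rfl

theorem dorroh_stronglySkewSymmetric_iff_general
    {S R : Type*} [CommRing S] [Ring R] [Algebra S R] (σ : R →ₐ[S] R) :
    StronglySkewSymmetric R σ.toRingHom ↔
      StronglySkewSymmetric (Unitization S R) (dorrohMap σ) :=
  ⟨fun hR => ((StronglySkewSymmetric.id_of_commRing S).prodMap hR).of_injective_s18
      (Unitization.toProdAlgHom S R) (Unitization.toProdAlgHom_injective S R)
      (semiconj_toProdAlgHom_dorrohMap σ),
    fun hD => hD.of_injective_s18 (Unitization.inrNonUnitalAlgHom S R) Unitization.inr_injective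
      (semiconj_inr_dorrohMap σ)⟩

theorem dorroh_stronglySkewSymmetric_iff
    {S R : Type*} [CommRing S] [IsDomain S] [Ring R] [Algebra S R] (σ : R →ₐ[S] R) :
    StronglySkewSymmetric R σ.toRingHom ↔
      StronglySkewSymmetric (Unitization S R) (dorrohMap σ) :=
  dorroh_stronglySkewSymmetric_iff_general σ
end
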